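/- arXiv:2505.19340 — 4 statements merged into one kernel-verified Lean document; each statement's English description precedes it below -/
import Mathlib

section
/- For integers p, q with 2 ≤ p ≤ q, and for each σ ∈ {μ, μ_o, μ_d, μ_t}, there exists a connected graph G and a vertex x ∈ V(G) with G−x connected such that σ(G) = q and σ(G−x) = p. -/
open SimpleGraph

/-- `u` and `v` are `X`-visible in `G`: there is a shortest `u,v`-walk whose
vertices meet `X` only possibly in `u` and `v`. -/
def IsMVisible {V : Type*} (G : SimpleGraph V) (X : Set V) (u v : V) : Prop :=
  ∃ P : G.Walk u v, P.length = G.dist u v ∧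
    ∀ w ∈ P.support, w ∈ X → w = u ∨ w = v

/-- mutual-visibility set -/
def IsMVSet {V : Type*} (G : SimpleGraph V) (X : Set V) : Prop :=
  ∀ u ∈ X, ∀ v ∈ X, IsMVisible G X u v

/-- outer mutual-visibility set -/
def IsOuterMVSet {V : Type*} (G : SimpleGraph V) (X : Set V) : Prop :=
  ∀ u ∈ X, ∀ v : V, IsMVisible G X u v

/-- dual mutual-visibility set -/
def IsDualMVSet {V : Type*} (G : SimpleGraph V) (X : Set V) : Prop :=
  (∀ u ∈ X, ∀ v ∈ X, IsMVisible G X u v) ∧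
  (∀ u ∉ X, ∀ v ∉ X, IsMVisible G X u v)

/-- total mutual-visibility set -/
def IsTotalMVSet {V : Type*} (G : SimpleGraph V) (X : Set V) : Prop :=
  ∀ u v : V, IsMVisible G X u v

/-- the mutual-visibility number μ(G) -/
noncomputable def mu {V : Type*} (G : SimpleGraph V) : ℕ :=
  sSup {n | ∃ X : Set V, IsMVSet G X ∧ X.ncard = n}

/-- the outer mutual-visibility number μₒ(G) -/
noncomputable def muO {V : Type*} (G : SimpleGraph V) : ℕ :=
  sSup {n | ∃ X : Set V, IsOuterMVSet G X ∧ X.ncard = n}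

/-- the dual mutual-visibility number μ_d(G) -/
noncomputable def muD {V : Type*} (G : SimpleGraph V) : ℕ :=
  sSup {n | ∃ X : Set V, IsDualMVSet G X ∧ X.ncard = n}

/-- the total mutual-visibility number μ_t(G) -/
noncomputable def muT {V : Type*} (G : SimpleGraph V) : ℕ :=
  sSup {n | ∃ X : Set V, IsTotalMVSet G X ∧ X.ncard = n}

section Infra
variable {V : Type*} {G : SimpleGraph V} {u v : V} {X : Set V}

lemma walk_cross (S : Set V) (t : V) (h : ∀ a b, G.Adj a b → a ∈ S → b ∈ S ∨ b = t)
    (hu : u ∈ S) (hv : v ∉ S) (P : G.Walk u v) : t ∈ P.support := by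
  induction P with
  | nil => exact absurd hu hv
  | @cons a b c hadj P ih =>
    rcases h a b hadj hu with hb | hb
    · simp [Walk.support_cons, ih hb hv]
    · simp [Walk.support_cons, ← hb]

lemma walk_pot (f : V → ℕ) (hf : ∀ a b, G.Adj a b → f a ≤ f b + 1) (P : G.Walk u v) :
    f u ≤ f v + P.length := by
  induction P with
  | nil => simp
  | @cons a b c hadj P ih =>
    have := hf a b hadj
    simp only [Walk.length_cons]
    omega

lemma isMVisible_refl : IsMVisible G X u u :=
  ⟨Walk.nil, by simp [SimpleGraph.dist_self], by simp⟩

lemma isMVisible_of_adj (h : G.Adj u v) : IsMVisible G X u v := by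
  refine ⟨h.toWalk, ?_, ?_⟩
  · simp [SimpleGraph.dist_eq_one_iff_adj.2 h]
  · intro w hw _
    simpa using hw

lemma isMVisible_two (hne : u ≠ v) (hnadj : ¬ G.Adj u v) {w : V}
    (h1 : G.Adj u w) (h2 : G.Adj w v) (hw : w ∉ X) : IsMVisible G X u v := by
  refine ⟨Walk.cons h1 h2.toWalk, ?_, ?_⟩
  · have hle : G.dist u v ≤ 2 := by
      simpa using SimpleGraph.dist_le (Walk.cons h1 h2.toWalk)
    have h0 : G.dist u v ≠ 0 := by
      rw [SimpleGraph.dist_ne_zero_iff_ne_and_reachable]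
      exact ⟨hne, (Walk.cons h1 h2.toWalk).reachable⟩
    have h1' : G.dist u v ≠ 1 := fun hc => hnadj (SimpleGraph.dist_eq_one_iff_adj.1 hc)
    simp only [Walk.length_cons, Walk.length_nil]
    omega
  · intro z hz hzX
    simp only [Walk.support_cons, List.mem_cons, Walk.support_nil] at hz
    rcases hz with rfl | hz
    · exact Or.inl rfl
    rcases hz with rfl | hz
    · exact absurd hzX hw
    simp only [List.mem_cons, List.not_mem_nil, or_false] at hz
    exact Or.inr hz

lemma isMVisible_of_opt (P : G.Walk u v) (f : V → ℕ)
    (hf : ∀ a b, G.Adj a b → f a ≤ f b + 1) (hfu : f u = P.length) (hfv : f v = 0)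
    (hsup : ∀ w ∈ P.support, w ∈ X → w = u ∨ w = v) : IsMVisible G X u v := by
  refine ⟨P, le_antisymm ?_ (SimpleGraph.dist_le P), hsup⟩
  obtain ⟨Q, hQ⟩ := P.reachable.exists_walk_length_eq_dist
  have := walk_pot f hf Q
  omega

lemma IsMVisible.symm (h : IsMVisible G X u v) : IsMVisible G X v u := by
  obtain ⟨P, h1, h2⟩ := h
  refine ⟨P.reverse, ?_, ?_⟩
  · rw [Walk.length_reverse, SimpleGraph.dist_comm]; exact h1
  · intro w hw hwX
    rw [Walk.support_reverse, List.mem_reverse] at hw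
    exact (h2 w hw hwX).symm

lemma not_visible_blocked (t : V) (ht : t ∈ X) (htu : t ≠ u) (htv : t ≠ v)
    (hblock : ∀ P : G.Walk u v, t ∈ P.support) : ¬ IsMVisible G X u v := by
  rintro ⟨P, -, hs⟩
  rcases hs t (hblock P) ht with rfl | rfl
  · exact htu rfl
  · exact htv rfl

lemma not_visible_full (hX : ∀ w, w ∈ X) (hne : u ≠ v) (hnadj : ¬ G.Adj u v) :
    ¬ IsMVisible G X u v := by
  rintro ⟨P, -, hs⟩
  cases P with
  | nil => exact hne rfl
  | @cons a b c hadj P =>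
    rcases hs b (by simp [Walk.support_cons]) (hX b) with rfl | rfl
    · exact hadj.ne rfl
    · exact hnadj hadj

end Infra

lemma sSup_eq_of_mem_ub {S : Set ℕ} {k : ℕ} (hk : k ∈ S) (hub : ∀ n ∈ S, n ≤ k) :
    sSup S = k :=
  le_antisymm (csSup_le ⟨k, hk⟩ hub) (le_csSup ⟨k, hub⟩ hk)

lemma allFour {V : Type*} (G : SimpleGraph V) (k : ℕ) (X₀ : Set V)
    (h1 : IsTotalMVSet G X₀) (h2 : X₀.ncard = k)
    (h3 : ∀ X : Set V, IsMVSet G X → X.ncard ≤ k) :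
    mu G = k ∧ muO G = k ∧ muD G = k ∧ muT G = k := by
  have hmv : IsMVSet G X₀ := fun u _ v _ => h1 u v
  refine ⟨?_, ?_, ?_, ?_⟩
  · exact sSup_eq_of_mem_ub ⟨X₀, hmv, h2⟩ (by rintro n ⟨X, hX, rfl⟩; exact h3 X hX)
  · exact sSup_eq_of_mem_ub ⟨X₀, fun u _ v => h1 u v, h2⟩
      (by rintro n ⟨X, hX, rfl⟩; exact h3 X (fun u hu v _ => hX u hu v))
  · exact sSup_eq_of_mem_ub ⟨X₀, ⟨fun u _ v _ => h1 u v, fun u _ v _ => h1 u v⟩, h2⟩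
      (by rintro n ⟨X, hX, rfl⟩; exact h3 X hX.1)
  · exact sSup_eq_of_mem_ub ⟨X₀, h1, h2⟩
      (by rintro n ⟨X, hX, rfl⟩; exact h3 X (fun u _ v _ => hX u v))

section Case2
variable (p : ℕ)

def G2 : SimpleGraph (Fin (p + 1)) where
  Adj u v := u ≠ v ∧ ¬(u.val = 0 ∧ v.val = 1) ∧ ¬(u.val = 1 ∧ v.val = 0)
  symm := ⟨by rintro u v ⟨h1, h2, h3⟩; exact ⟨h1.symm, fun h => h3 ⟨h.2, h.1⟩, fun h => h2 ⟨h.2, h.1⟩⟩⟩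
  loopless := ⟨fun u h => h.1 rfl⟩

lemma G2_adj {u v : Fin (p+1)} :
    (G2 p).Adj u v ↔ u.val ≠ v.val ∧ ¬(u.val = 0 ∧ v.val = 1) ∧ ¬(u.val = 1 ∧ v.val = 0) := by
  constructor
  · rintro ⟨h1, h2, h3⟩; exact ⟨fun h => h1 (Fin.ext h), h2, h3⟩
  · rintro ⟨h1, h2, h3⟩; exact ⟨fun h => h1 (by rw [h]), h2, h3⟩

lemma ncard_ne (z : Fin (p+1)) : ({v : Fin (p+1) | v ≠ z}).ncard = p := by
  have h1 : {v : Fin (p+1) | v ≠ z} = Set.univ \ {z} := by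
    ext v; simp
  rw [h1, Set.ncard_diff_singleton_of_mem (Set.mem_univ z), Set.ncard_univ]
  simp

variable (hp : 2 ≤ p)
include hp

lemma G2_conn : (G2 p).Connected := by
  rw [connected_iff]
  refine ⟨fun u v => ?_, ⟨0⟩⟩
  set c : Fin (p+1) := ⟨2, by omega⟩ with hc
  have hub : ∀ w : Fin (p+1), w ≠ c → (G2 p).Adj w c := by
    intro w hw
    rw [G2_adj]
    have hwv : w.val ≠ 2 := fun h => hw (Fin.ext h)
    simp only [hc]
    omega
  by_cases hu : u = c
  · subst hu
    by_cases hv : v = c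
    · rw [hv]
    · exact (hub v hv).reachable.symm
  · by_cases hv : v = c
    · rw [hv]; exact (hub u hu).reachable
    · exact (hub u hu).reachable.trans ((hub v hv).reachable.symm)

lemma G2_total : IsTotalMVSet (G2 p) {v : Fin (p+1) | v ≠ ⟨2, by omega⟩} := by
  set c : Fin (p+1) := ⟨2, by omega⟩ with hc
  intro u v
  by_cases huv : u = v
  · subst huv; exact isMVisible_refl
  by_cases hadj : (G2 p).Adj u v
  · exact isMVisible_of_adj hadj
  · have hne : u.val ≠ v.val := fun h => huv (Fin.ext h)
    rw [G2_adj] at hadj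
    push_neg at hadj
    have hvals : (u.val = 0 ∧ v.val = 1) ∨ (u.val = 1 ∧ v.val = 0) := by tauto
    have hu2 : (G2 p).Adj u c := by rw [G2_adj]; simp only [hc]; omega
    have h2v : (G2 p).Adj c v := by rw [G2_adj]; simp only [hc]; omega
    refine isMVisible_two huv (by rw [G2_adj]; push_neg; tauto) hu2 h2v (by simp)

lemma G2_upper (X : Set (Fin (p+1))) (hX : IsMVSet (G2 p) X) : X.ncard ≤ p := by
  by_contra hc
  push_neg at hc
  have hXuniv : X = Set.univ := by
    apply Set.eq_of_subset_of_ncard_le (Set.subset_univ X)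
    rw [Set.ncard_univ, Nat.card_eq_fintype_card, Fintype.card_fin]
    have := Set.ncard_le_ncard (Set.subset_univ X) Set.finite_univ
    rw [Set.ncard_univ, Nat.card_eq_fintype_card, Fintype.card_fin] at this
    omega
  set z : Fin (p+1) := ⟨0, by omega⟩ with hz
  set o : Fin (p+1) := ⟨1, by omega⟩ with ho
  have h01 : ¬ (G2 p).Adj z o := by
    rw [G2_adj]; simp [hz, ho]
  have hne01 : z ≠ o := by
    intro h; have := congrArg Fin.val h; simp [hz, ho] at this
  exact not_visible_full (by rw [hXuniv]; intro w; trivial) hne01 h01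
    (hX z (by rw [hXuniv]; trivial) o (by rw [hXuniv]; trivial))

lemma G2_induce_complete :
    ∀ a b : {v : Fin (p+1) | v ≠ ⟨0, by omega⟩},
      a ≠ b → ((G2 p).induce {v : Fin (p+1) | v ≠ ⟨0, by omega⟩}).Adj a b := by
  rintro ⟨a, ha⟩ ⟨b, hb⟩ hab
  simp only [Set.mem_setOf_eq] at ha hb
  have ha0 : a.val ≠ 0 := fun h => ha (Fin.ext h)
  have hb0 : b.val ≠ 0 := fun h => hb (Fin.ext h)
  have hab' : a ≠ b := fun h => hab (Subtype.ext h)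
  have : (G2 p).Adj a b := by
    rw [G2_adj]
    exact ⟨fun h => hab' (Fin.ext h), by omega, by omega⟩
  exact this

lemma G2H_conn : ((G2 p).induce {v : Fin (p+1) | v ≠ ⟨0, by omega⟩}).Connected := by
  rw [connected_iff]
  constructor
  · intro a b
    by_cases hab : a = b
    · rw [hab]
    · exact (G2_induce_complete p hp a b hab).reachable
  · exact ⟨⟨⟨1, by omega⟩, by show _ ≠ _; intro h; exact absurd (congrArg Fin.val h) (by simp)⟩⟩

lemma G2H_total :
    IsTotalMVSet ((G2 p).induce {v : Fin (p+1) | v ≠ ⟨0, by omega⟩}) Set.univ := by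
  intro u v
  by_cases hab : u = v
  · subst hab; exact isMVisible_refl
  · exact isMVisible_of_adj (G2_induce_complete p hp u v hab)

lemma ncard_univ_sub : (Set.univ : Set {v : Fin (p+1) | v ≠ ⟨0, by omega⟩}).ncard = p := by
  rw [Set.ncard_univ, Nat.card_coe_set_eq, ncard_ne]

lemma G2H_upper (X : Set {v : Fin (p+1) | v ≠ ⟨0, by omega⟩}) : X.ncard ≤ p := by
  have := Set.ncard_le_ncard (Set.subset_univ X) Set.finite_univ
  rw [ncard_univ_sub p hp] at this
  exact this

end Case2

section Big
variable (p q : ℕ)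

/-- broom adjacency on values `1..q`: leaves `1..p-1` attached to center `q`,
spine `p..q` a path. -/
def hadjB (a b : ℕ) : Prop :=
  (a < p ∧ b = q) ∨ (b < p ∧ a = q) ∨ (a + 1 = b ∧ p ≤ a) ∨ (b + 1 = a ∧ p ≤ b)

/-- the cone (hub `0`) over the broom -/
def GB : SimpleGraph (Fin (q + 1)) where
  Adj u v := u ≠ v ∧ (u.val = 0 ∨ v.val = 0 ∨ hadjB p q u.val v.val)
  symm := ⟨by rintro u v ⟨h1, h2⟩; refine ⟨h1.symm, ?_⟩; unfold hadjB at *; tauto⟩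
  loopless := ⟨fun u h => h.1 rfl⟩

lemma GB_adj {u v : Fin (q+1)} :
    (GB p q).Adj u v ↔ u.val ≠ v.val ∧ (u.val = 0 ∨ v.val = 0 ∨ hadjB p q u.val v.val) := by
  constructor
  · rintro ⟨h1, h2⟩; exact ⟨fun h => h1 (Fin.ext h), h2⟩
  · rintro ⟨h1, h2⟩; exact ⟨fun h => h1 (by rw [h]), h2⟩

abbrev WB := {v : Fin (q + 1) | v ≠ 0}

abbrev HB : SimpleGraph ↥(WB q) := (GB p q).induce (WB q)

lemma wval_bounds (w : ↥(WB q)) : 1 ≤ w.val.val ∧ w.val.val ≤ q := by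
  constructor
  · rcases Nat.eq_zero_or_pos w.val.val with h | h
    · exact absurd (Fin.ext h : w.val = 0) w.prop
    · exact h
  · exact Nat.lt_succ_iff.mp w.val.isLt

lemma HB_adj {a b : ↥(WB q)} :
    (HB p q).Adj a b ↔ a.val.val ≠ b.val.val ∧ hadjB p q a.val.val b.val.val := by
  have h1 : (HB p q).Adj a b ↔ (GB p q).Adj a.val b.val := Iff.rfl
  rw [h1, GB_adj]
  have ha := (wval_bounds q a).1
  have hb := (wval_bounds q b).1
  constructor
  · rintro ⟨h2, h3⟩
    refine ⟨h2, ?_⟩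
    rcases h3 with h | h | h
    · omega
    · omega
    · exact h
  · rintro ⟨h2, h3⟩
    exact ⟨h2, Or.inr (Or.inr h3)⟩

variable {p q}

def mkW (hq : 1 ≤ q) (i : ℕ) : ↥(WB q) :=
  if h : 1 ≤ i ∧ i ≤ q then
    ⟨⟨i, by omega⟩, by
      intro hc
      have := congrArg Fin.val hc
      simp at this
      omega⟩
  else
    ⟨⟨1, by omega⟩, by
      intro hc
      have := congrArg Fin.val hc
      simp at this⟩

lemma mkW_val (hq : 1 ≤ q) {i : ℕ} (h1 : 1 ≤ i) (h2 : i ≤ q) :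
    (mkW hq i).val.val = i := by
  simp [mkW, h1, h2]

lemma mkW_eq (hq : 1 ≤ q) (w : ↥(WB q)) : mkW hq w.val.val = w := by
  have hb := wval_bounds q w
  exact Subtype.ext (Fin.ext (mkW_val hq hb.1 hb.2))

lemma spine_walk (hp : 2 ≤ p) (hq : 1 ≤ q) :
    ∀ (k b : ℕ), p ≤ b → b + k ≤ q →
      ∃ P : (HB p q).Walk (mkW hq (b + k)) (mkW hq b),
        P.length = k ∧ ∀ w ∈ P.support, b ≤ w.val.val ∧ w.val.val ≤ b + k := by
  intro k
  induction k with
  | zero =>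
    intro b hb hbq
    refine ⟨Walk.nil, rfl, ?_⟩
    intro w hw
    simp only [Walk.support_nil, List.mem_singleton] at hw
    subst hw
    rw [mkW_val hq (by omega) (by omega)]
    omega
  | succ k ih =>
    intro b hb hbq
    obtain ⟨P, hl, hs⟩ := ih b hb (by omega)
    have hadj : (HB p q).Adj (mkW hq (b + (k+1))) (mkW hq (b + k)) := by
      rw [HB_adj, mkW_val hq (by omega) (by omega), mkW_val hq (by omega) (by omega)]
      unfold hadjB
      omega
    refine ⟨Walk.cons hadj P, by simp [hl], ?_⟩
    intro w hw
    rw [Walk.support_cons, List.mem_cons] at hw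
    rcases hw with rfl | hw
    · rw [mkW_val hq (by omega) (by omega)]; omega
    · have := hs w hw; omega

def potB (b : ℕ) : ↥(WB q) → ℕ := fun w =>
  if w.val.val < p then (q - b) + 1 else ((w.val.val - b) + (b - w.val.val))

lemma potB_lip (hp : 2 ≤ p) {b : ℕ} (hb : p ≤ b) (hbq : b ≤ q) :
    ∀ x y, (HB p q).Adj x y → potB (p := p) b x ≤ potB (p := p) b y + 1 := by
  intro x y hxy
  rw [HB_adj] at hxy
  obtain ⟨hne, hadj⟩ := hxy
  unfold hadjB at hadj
  have hx := wval_bounds q x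
  have hy := wval_bounds q y
  unfold potB
  split_ifs <;> omega


def XB : Set ↥(WB q) := {w | w.val.val ≤ p}

lemma HB_total (hp : 2 ≤ p) (hq : p + 1 ≤ q) : IsTotalMVSet (HB p q) (XB (p := p) (q := q)) := by
  have hq1 : 1 ≤ q := by omega
  suffices aux : ∀ u v : ↥(WB q), u.val.val ≤ v.val.val →
      IsMVisible (HB p q) (XB (p := p) (q := q)) u v by
    intro u v
    rcases le_total u.val.val v.val.val with h | h
    · exact aux u v h
    · exact (aux v u h).symm
  intro u v hle
  have hu := wval_bounds q u
  have hv := wval_bounds q v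
  by_cases heq : u.val.val = v.val.val
  · have : u = v := Subtype.ext (Fin.ext heq)
    subst this
    exact isMVisible_refl
  have hlt : u.val.val < v.val.val := by omega
  have hneuv : u ≠ v := fun h => heq (by rw [h])
  rcases lt_or_ge v.val.val p with hbp | hbp
  · -- both leaves
    set c : ↥(WB q) := mkW hq1 q with hc
    have hcv : c.val.val = q := mkW_val hq1 (by omega) le_rfl
    have h1 : (HB p q).Adj u c := by
      rw [HB_adj, hcv]; unfold hadjB; omega
    have h2 : (HB p q).Adj c v := by
      rw [HB_adj, hcv]; unfold hadjB; omega
    have hnadj : ¬ (HB p q).Adj u v := by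
      rw [HB_adj]; unfold hadjB; omega
    have hcX : c ∉ XB (p := p) (q := q) := by
      simp only [XB, Set.mem_setOf_eq, hcv]; omega
    exact isMVisible_two hneuv hnadj h1 h2 hcX
  rcases lt_or_ge u.val.val p with hap | hap
  · -- leaf to spine
    by_cases hbq : v.val.val = q
    · -- adjacent to center
      refine isMVisible_of_adj ?_
      rw [HB_adj, hbq]; unfold hadjB; omega
    · -- v strictly inside spine
      set b := v.val.val with hbdef
      obtain ⟨P, hPl, hPs⟩ := spine_walk hp hq1 (q - b) b hbp (by omega)
      have e1 : mkW (q := q) hq1 (b + (q - b)) = mkW hq1 q := by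
        congr 1; omega
      have e2 : mkW (q := q) hq1 b = v := mkW_eq hq1 v
      have hadjuc : (HB p q).Adj u (mkW hq1 q) := by
        rw [HB_adj, mkW_val hq1 (by omega) le_rfl]; unfold hadjB; omega
      set P' : (HB p q).Walk (mkW hq1 q) v := (P.copy e1 e2)
      refine isMVisible_of_opt (Walk.cons hadjuc P') (potB (p := p) b)
        (potB_lip hp hbp (by omega)) ?_ ?_ ?_
      · simp only [Walk.length_cons, P', Walk.length_copy, hPl, potB, if_pos hap]
        try omega
      · simp only [potB, if_neg (by omega : ¬ v.val.val < p)]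
        omega
      · intro w hw hwX
        rw [Walk.support_cons, List.mem_cons] at hw
        rcases hw with rfl | hw
        · exact Or.inl rfl
        · have hb2 : b ≤ w.val.val ∧ w.val.val ≤ b + (q - b) := by
            apply hPs
            simpa [P', Walk.support_copy] using hw
          simp only [XB, Set.mem_setOf_eq] at hwX
          have : w.val.val = v.val.val := by omega
          exact Or.inr (Subtype.ext (Fin.ext this))
  · -- spine to spine
    refine IsMVisible.symm ?_
    set a := u.val.val with hadef
    set b := v.val.val with hbdef
    obtain ⟨P, hPl, hPs⟩ := spine_walk hp hq1 (b - a) a hap (by omega)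
    have e1 : mkW (q := q) hq1 (a + (b - a)) = v := by
      rw [show a + (b - a) = b by omega]; exact mkW_eq hq1 v
    have e2 : mkW (q := q) hq1 a = u := mkW_eq hq1 u
    refine isMVisible_of_opt (P.copy e1 e2) (potB (p := p) a)
      (potB_lip hp hap (by omega)) ?_ ?_ ?_
    · simp only [Walk.length_copy, hPl, potB, if_neg (by omega : ¬ v.val.val < p)]
      omega
    · simp only [potB, if_neg (by omega : ¬ u.val.val < p)]
      omega
    · intro w hw hwX
      have hb2 : a ≤ w.val.val ∧ w.val.val ≤ a + (b - a) := by
        apply hPs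
        simpa [Walk.support_copy] using hw
      simp only [XB, Set.mem_setOf_eq] at hwX
      have : w.val.val = u.val.val := by omega
      exact Or.inr (Subtype.ext (Fin.ext this))

lemma XB_ncard (hp : 2 ≤ p) (hq : p + 1 ≤ q) : (XB (p := p) (q := q)).ncard = p := by
  have hq1 : 1 ≤ q := by omega
  have himg : XB (p := p) (q := q) = (mkW hq1) '' (Set.Icc 1 p) := by
    ext w
    constructor
    · intro h
      have hb := wval_bounds q w
      simp only [XB, Set.mem_setOf_eq] at h
      exact ⟨w.val.val, ⟨hb.1, h⟩, mkW_eq hq1 w⟩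
    · rintro ⟨i, hi, rfl⟩
      simp only [Set.mem_Icc] at hi
      simp only [XB, Set.mem_setOf_eq, mkW_val hq1 hi.1 (by omega)]
      exact hi.2
  rw [himg, Set.ncard_image_of_injOn, ← Finset.coe_Icc, Set.ncard_coe_finset, Nat.card_Icc]
  · omega
  · intro i hi j hj hij
    simp only [Set.mem_Icc] at hi hj
    have := congrArg (fun w => (Subtype.val w).val) hij
    simpa [mkW_val hq1 hi.1 (by omega), mkW_val hq1 hj.1 (by omega)] using this

lemma HB_upper (hp : 2 ≤ p) (hq : p + 1 ≤ q) (X : Set ↥(WB q))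
    (hX : IsMVSet (HB p q) X) : X.ncard ≤ p := by
  by_contra hc
  push_neg at hc
  have vne : ∀ x y : ↥(WB q), x.val.val ≠ y.val.val → x ≠ y :=
    fun x y h hxy => h (by rw [hxy])
  have veq : ∀ x y : ↥(WB q), x.val.val = y.val.val → x = y :=
    fun x y h => Subtype.ext (Fin.ext h)
  have helper1 : ∀ ℓ s t : ↥(WB q), ℓ ∈ X → s ∈ X → t ∈ X →
      ℓ.val.val < p → p ≤ s.val.val → s.val.val < t.val.val → False := by
    intro ℓ s t hℓ hs ht hℓp hsp hst
    have hbt := wval_bounds q t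
    refine not_visible_blocked t ht (vne t ℓ (by omega)) (vne t s (by omega))
      ?_ (hX ℓ hℓ s hs)
    intro P
    refine walk_cross {w : ↥(WB q) | w.val.val < p ∨ t.val.val < w.val.val} t ?_ ?_ ?_ P
    · intro x y hxy hxC
      rw [HB_adj] at hxy
      obtain ⟨hne, hadj⟩ := hxy
      by_cases hyt : y.val.val = t.val.val
      · exact Or.inr (veq y t hyt)
      · left
        simp only [Set.mem_setOf_eq] at hxC ⊢
        have hbx := wval_bounds q x
        have hby := wval_bounds q y
        unfold hadjB at hadj
        omega
    · simp only [Set.mem_setOf_eq]; omega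
    · simp only [Set.mem_setOf_eq]; omega
  have helper2 : ∀ r s t : ↥(WB q), r ∈ X → s ∈ X → t ∈ X →
      p ≤ r.val.val → r.val.val < s.val.val → s.val.val < t.val.val → False := by
    intro r s t hr hs ht hrp hrs hst
    have hbt := wval_bounds q t
    have hbs := wval_bounds q s
    refine not_visible_blocked s hs (vne s r (by omega)) (vne s t (by omega))
      ?_ (hX r hr t ht)
    intro P
    refine walk_cross {w : ↥(WB q) | p ≤ w.val.val ∧ w.val.val < s.val.val} s ?_ ?_ ?_ P
    · intro x y hxy hxC
      rw [HB_adj] at hxy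
      obtain ⟨hne, hadj⟩ := hxy
      by_cases hys : y.val.val = s.val.val
      · exact Or.inr (veq y s hys)
      · left
        simp only [Set.mem_setOf_eq] at hxC ⊢
        have hbx := wval_bounds q x
        have hby := wval_bounds q y
        unfold hadjB at hadj
        omega
    · simp only [Set.mem_setOf_eq]; omega
    · simp only [Set.mem_setOf_eq]; omega
  -- pigeonhole: at least two spine vertices in X
  have hL : ({w : ↥(WB q) | w.val.val < p}).ncard ≤ p - 1 := by
    have := Set.ncard_le_ncard_of_injOn (fun w => w.val.val)
      (s := {w : ↥(WB q) | w.val.val < p}) (t := ↑(Finset.Ico 1 p))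
      ?_ ?_ (Set.toFinite _)
    · rwa [Set.ncard_coe_finset, Nat.card_Ico] at this
    · intro w hw
      simp only [Set.mem_setOf_eq] at hw
      have := (wval_bounds q w).1
      simp only [Finset.coe_Ico, Set.mem_Ico]
      omega
    · intro x hx y hy hxy
      exact veq x y hxy
  have hsplit : X = (X ∩ {w : ↥(WB q) | w.val.val < p}) ∪ (X ∩ {w | p ≤ w.val.val}) := by
    ext w
    simp only [Set.mem_union, Set.mem_inter_iff, Set.mem_setOf_eq]
    constructor
    · intro h
      rcases lt_or_ge w.val.val p with h2 | h2
      · exact Or.inl ⟨h, h2⟩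
      · exact Or.inr ⟨h, h2⟩
    · rintro (⟨h, -⟩ | ⟨h, -⟩) <;> exact h
  have h1 : (X ∩ {w : ↥(WB q) | w.val.val < p}).ncard ≤ p - 1 :=
    le_trans (Set.ncard_le_ncard Set.inter_subset_right (Set.toFinite _)) hL
  have h2 : X.ncard ≤ (X ∩ {w : ↥(WB q) | w.val.val < p}).ncard
      + (X ∩ {w : ↥(WB q) | p ≤ w.val.val}).ncard := by
    conv_lhs => rw [hsplit]
    exact Set.ncard_union_le _ _
  have hS2 : 1 < (X ∩ {w : ↥(WB q) | p ≤ w.val.val}).ncard := by omega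
  obtain ⟨s, hs, t, ht, hst⟩ := (Set.one_lt_ncard (Set.toFinite _)).mp hS2
  have hsX := hs.1
  have hsSp : p ≤ s.val.val := hs.2
  have htX := ht.1
  have htSp : p ≤ t.val.val := ht.2
  have hstv : s.val.val ≠ t.val.val := fun h => hst (veq s t h)
  by_cases hleaf : ∃ ℓ ∈ X, ℓ.val.val < p
  · obtain ⟨ℓ, hℓX, hℓp⟩ := hleaf
    rcases lt_or_gt_of_ne hstv with h | h
    · exact helper1 ℓ s t hℓX hsX htX hℓp hsSp h
    · exact helper1 ℓ t s hℓX htX hsX hℓp htSp h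
  · push_neg at hleaf
    have h3 : 2 < X.ncard := by omega
    obtain ⟨a, ha, b, hb, c, hcc, hab, hac, hbc⟩ := (Set.two_lt_ncard (Set.toFinite _)).mp h3
    have hav := hleaf a ha
    have hbv := hleaf b hb
    have hcv := hleaf c hcc
    have habv : a.val.val ≠ b.val.val := fun h => hab (veq a b h)
    have hacv : a.val.val ≠ c.val.val := fun h => hac (veq a c h)
    have hbcv : b.val.val ≠ c.val.val := fun h => hbc (veq b c h)
    rcases lt_or_gt_of_ne habv with h1' | h1'
    · rcases lt_or_gt_of_ne hbcv with h2' | h2'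
      · exact helper2 a b c ha hb hcc hav h1' h2'
      · rcases lt_or_gt_of_ne hacv with h3' | h3'
        · exact helper2 a c b ha hcc hb hav h3' h2'
        · exact helper2 c a b hcc ha hb hcv h3' h1'
    · rcases lt_or_gt_of_ne hacv with h2' | h2'
      · exact helper2 b a c hb ha hcc hbv h1' h2'
      · rcases lt_or_gt_of_ne hbcv with h3' | h3'
        · exact helper2 b c a hb hcc ha hbv h3' h2'
        · exact helper2 c b a hcc hb ha hcv h3' h1'

lemma GB_total (hp : 2 ≤ p) (hq : p + 1 ≤ q) :
    IsTotalMVSet (GB p q) {v : Fin (q+1) | v ≠ 0} := by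
  intro u v
  by_cases huv : u = v
  · subst huv; exact isMVisible_refl
  by_cases hadj : (GB p q).Adj u v
  · exact isMVisible_of_adj hadj
  · have hu0 : u.val ≠ 0 := by
      intro h
      exact hadj ⟨huv, Or.inl h⟩
    have hv0 : v.val ≠ 0 := by
      intro h
      exact hadj ⟨huv, Or.inr (Or.inl h)⟩
    have h1 : (GB p q).Adj u 0 := ⟨fun h => hu0 (by rw [h]; rfl), Or.inr (Or.inl rfl)⟩
    have h2 : (GB p q).Adj (0 : Fin (q+1)) v := ⟨fun h => hv0 (by rw [← h]; rfl), Or.inl rfl⟩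
    exact isMVisible_two huv hadj h1 h2 (by simp)

lemma GB_upper (hp : 2 ≤ p) (hq : p + 1 ≤ q) (X : Set (Fin (q+1)))
    (hX : IsMVSet (GB p q) X) : X.ncard ≤ q := by
  by_contra hc
  push_neg at hc
  have hXuniv : X = Set.univ := by
    apply Set.eq_of_subset_of_ncard_le (Set.subset_univ X)
    rw [Set.ncard_univ, Nat.card_eq_fintype_card, Fintype.card_fin]
    have := Set.ncard_le_ncard (Set.subset_univ X) Set.finite_univ
    rw [Set.ncard_univ, Nat.card_eq_fintype_card, Fintype.card_fin] at this
    omega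
  set u : Fin (q+1) := ⟨1, by omega⟩ with hu
  set v : Fin (q+1) := ⟨p, by omega⟩ with hv
  have hne : u ≠ v := by
    intro h
    have := congrArg Fin.val h
    simp [hu, hv] at this
    omega
  have hnadj : ¬ (GB p q).Adj u v := by
    rw [GB_adj]
    simp only [hu, hv]
    unfold hadjB
    omega
  exact not_visible_full (by rw [hXuniv]; intro w; trivial) hne hnadj
    (hX u (by rw [hXuniv]; trivial) v (by rw [hXuniv]; trivial))

lemma GB_conn (hp : 2 ≤ p) (hq : p + 1 ≤ q) : (GB p q).Connected := by
  rw [connected_iff]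
  refine ⟨fun u v => ?_, ⟨0⟩⟩
  have hub : ∀ w : Fin (q+1), w ≠ 0 → (GB p q).Adj w 0 := by
    intro w hw
    exact ⟨hw, Or.inr (Or.inl rfl)⟩
  by_cases hu : u = 0
  · subst hu
    by_cases hv : v = 0
    · rw [hv]
    · exact (hub v hv).reachable.symm
  · by_cases hv : v = 0
    · rw [hv]; exact (hub u hu).reachable
    · exact (hub u hu).reachable.trans ((hub v hv).reachable.symm)

lemma HB_conn (hp : 2 ≤ p) (hq : p + 1 ≤ q) : (HB p q).Connected := by
  have hq1 : 1 ≤ q := by omega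
  rw [connected_iff]
  set c : ↥(WB q) := mkW hq1 q with hcdef
  have hcv : c.val.val = q := mkW_val hq1 (by omega) le_rfl
  have hcenter : ∀ w : ↥(WB q), (HB p q).Reachable w c := by
    intro w
    have hb := wval_bounds q w
    rcases lt_or_ge w.val.val p with hwp | hwp
    · refine (Adj.reachable ?_)
      rw [HB_adj, hcv]
      unfold hadjB
      omega
    · obtain ⟨P, hPl, hPs⟩ := spine_walk hp hq1 (q - w.val.val) w.val.val hwp (by omega)
      have e1 : mkW (q := q) hq1 (w.val.val + (q - w.val.val)) = c := by
        rw [hcdef]; congr 1; omega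
      have e2 : mkW (q := q) hq1 w.val.val = w := mkW_eq hq1 w
      exact (P.copy e1 e2).reverse.reachable
  exact ⟨fun u v => (hcenter u).trans (hcenter v).symm, ⟨c⟩⟩

end Big

theorem stmt_15 (p q : ℕ) (hp : 2 ≤ p) (hpq : p ≤ q) :
    (∃ (V : Type) (G : SimpleGraph V) (x : V), Finite V ∧
      G.Connected ∧ (G.induce {v | v ≠ x}).Connected ∧
      mu G = q ∧ mu (G.induce {v | v ≠ x}) = p) ∧
    (∃ (V : Type) (G : SimpleGraph V) (x : V), Finite V ∧
      G.Connected ∧ (G.induce {v | v ≠ x}).Connected ∧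
      muO G = q ∧ muO (G.induce {v | v ≠ x}) = p) ∧
    (∃ (V : Type) (G : SimpleGraph V) (x : V), Finite V ∧
      G.Connected ∧ (G.induce {v | v ≠ x}).Connected ∧
      muD G = q ∧ muD (G.induce {v | v ≠ x}) = p) ∧
    (∃ (V : Type) (G : SimpleGraph V) (x : V), Finite V ∧
      G.Connected ∧ (G.induce {v | v ≠ x}).Connected ∧
      muT G = q ∧ muT (G.induce {v | v ≠ x}) = p) := by
  rcases eq_or_lt_of_le hpq with rfl | hlt
  · -- q = p
    have h4G := allFour (G2 p) p {v : Fin (p+1) | v ≠ ⟨2, by omega⟩}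
      (G2_total p hp) (ncard_ne p _) (G2_upper p hp)
    have h4H := allFour ((G2 p).induce {v : Fin (p+1) | v ≠ ⟨0, by omega⟩}) p Set.univ
      (G2H_total p hp) (ncard_univ_sub p hp) (fun X _ => G2H_upper p hp X)
    exact ⟨⟨Fin (p+1), G2 p, ⟨0, by omega⟩, inferInstance, G2_conn p hp, G2H_conn p hp,
        h4G.1, h4H.1⟩,
      ⟨Fin (p+1), G2 p, ⟨0, by omega⟩, inferInstance, G2_conn p hp, G2H_conn p hp,
        h4G.2.1, h4H.2.1⟩,
      ⟨Fin (p+1), G2 p, ⟨0, by omega⟩, inferInstance, G2_conn p hp, G2H_conn p hp,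
        h4G.2.2.1, h4H.2.2.1⟩,
      ⟨Fin (p+1), G2 p, ⟨0, by omega⟩, inferInstance, G2_conn p hp, G2H_conn p hp,
        h4G.2.2.2, h4H.2.2.2⟩⟩
  · -- p < q
    have hq : p + 1 ≤ q := hlt
    have h4G := allFour (GB p q) q {v : Fin (q+1) | v ≠ 0}
      (GB_total hp hq) (ncard_ne q 0) (GB_upper hp hq)
    have h4H := allFour (HB p q) p (XB (p := p) (q := q))
      (HB_total hp hq) (XB_ncard hp hq) (HB_upper hp hq)
    exact ⟨⟨Fin (q+1), GB p q, 0, inferInstance, GB_conn hp hq, HB_conn hp hq,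
        h4G.1, h4H.1⟩,
      ⟨Fin (q+1), GB p q, 0, inferInstance, GB_conn hp hq, HB_conn hp hq,
        h4G.2.1, h4H.2.1⟩,
      ⟨Fin (q+1), GB p q, 0, inferInstance, GB_conn hp hq, HB_conn hp hq,
        h4G.2.2.1, h4H.2.2.1⟩,
      ⟨Fin (q+1), GB p q, 0, inferInstance, GB_conn hp hq, HB_conn hp hq,
        h4G.2.2.2, h4H.2.2.2⟩⟩
end

section
/- For every integer q ≥ 6, the graph C_{q−1}^+ obtained from the cycle C_{q−1} by attaching a single pendant leaf satisfies μ_t(C_{q−1}^+) = 1. Consequently, for every q ≥ 6 there exists a connected graph of order q whose total mutual-visibility number is 1. -/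
open SimpleGraph

/-- relation underlying `C_n^+`: a cycle `C_n` (on `some`-vertices) with a pendant
leaf `none` attached to the cycle vertex `0`. -/
def CPrel (n : ℕ) : Option (Fin n) → Option (Fin n) → Prop
  | some i, some j => (SimpleGraph.cycleGraph n).Adj i j
  | none, some i => (i : ℕ) = 0
  | some i, none => (i : ℕ) = 0
  | none, none => False

/-- the graph `C_n^+` obtained from the cycle `C_n` by attaching one pendant leaf -/
def CPlus (n : ℕ) : SimpleGraph (Option (Fin n)) := SimpleGraph.fromRel (CPrel n)

section Aux

open scoped Fin.NatCast Fin.CommRing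

variable {n : ℕ}

lemma cplus_adj_some {i j : Fin n} :
    (CPlus n).Adj (some i) (some j) ↔ (cycleGraph n).Adj i j := by
  simp only [CPlus, fromRel_adj, CPrel]
  constructor
  · rintro ⟨-, h | h⟩
    · exact h
    · exact h.symm
  · intro h
    exact ⟨by simpa using h.ne, Or.inl h⟩

lemma cplus_adj_none_some {i : Fin n} :
    (CPlus n).Adj none (some i) ↔ (i : ℕ) = 0 := by
  simp only [CPlus, fromRel_adj, CPrel]
  constructor
  · rintro ⟨-, h | h⟩ <;> exact h
  · intro h; exact ⟨by simp, Or.inl h⟩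

lemma cplus_adj_some_none {i : Fin n} :
    (CPlus n).Adj (some i) none ↔ (i : ℕ) = 0 := by
  rw [adj_comm]; exact cplus_adj_none_some

def someHom (n : ℕ) : cycleGraph n →g CPlus n where
  toFun := some
  map_rel' := fun h => cplus_adj_some.mpr h

@[simp] lemma someHom_apply {a : Fin n} : someHom n a = some a := rfl

lemma cplus_connected {m : ℕ} : (CPlus (m + 1)).Connected := by
  have hreach : ∀ u : Option (Fin (m + 1)), (CPlus (m + 1)).Reachable u (some 0) := by
    intro u
    cases u with
    | none => exact Adj.reachable (cplus_adj_none_some.mpr (by simp))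
    | some i => exact Reachable.map (someHom (m + 1)) (cycleGraph_connected.preconnected i 0)
  exact ⟨fun u v => (hreach u).trans (hreach v).symm⟩

lemma fin_cast_val {m k : ℕ} (h2 : k < m + 5) : (((k : ℕ) : Fin (m + 5)) : ℕ) = k := by
  rw [Fin.val_natCast]; exact Nat.mod_eq_of_lt h2

lemma fin_cast_ne_zero {m k : ℕ} (h1 : 0 < k) (h2 : k < m + 5) :
    ((k : ℕ) : Fin (m + 5)) ≠ 0 := by
  intro h
  have := fin_cast_val h2
  rw [h] at this
  simp at this
  omega

lemma fin_val_eq_one {m : ℕ} {a : Fin (m + 5)} (h : (a : ℕ) = 1) : a = 1 :=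
  Fin.ext (by rw [h]; rfl)

lemma cplus_dist_two {m : ℕ} (i : Fin (m + 5)) :
    (CPlus (m + 5)).dist (some (i - 1)) (some (i + 1)) = 2 := by
  have a1 : (cycleGraph (m + 5)).Adj (i - 1) i :=
    cycleGraph_adj'.mpr (Or.inr (by rw [sub_sub_cancel]; rfl))
  have a2 : (cycleGraph (m + 5)).Adj i (i + 1) :=
    cycleGraph_adj'.mpr (Or.inr (by rw [add_sub_cancel_left]; rfl))
  have hne : some (i - 1) ≠ some (i + 1) := by
    intro h
    have h' : i - 1 = i + 1 := Option.some_injective _ h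
    have h2 : ((2 : ℕ) : Fin (m + 5)) = 0 := by push_cast; linear_combination -h'
    exact fin_cast_ne_zero (by norm_num) (by omega) h2
  have hle : (CPlus (m + 5)).dist (some (i - 1)) (some (i + 1)) ≤ 2 := by
    have := dist_le (Walk.cons (cplus_adj_some.mpr a1)
      (Walk.cons (cplus_adj_some.mpr a2) Walk.nil))
    simpa using this
  have hne0 : (CPlus (m + 5)).dist (some (i - 1)) (some (i + 1)) ≠ 0 := by
    intro h
    have hconn : (CPlus (m + 5)).Connected := cplus_connected (m := m + 4)
    exact hne (hconn.dist_eq_zero_iff.mp h)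
  have hne1 : (CPlus (m + 5)).dist (some (i - 1)) (some (i + 1)) ≠ 1 := by
    intro h
    have hadj := dist_eq_one_iff_adj.mp h
    rcases cycleGraph_adj'.mp (cplus_adj_some.mp hadj) with h' | h'
    · have h'' : i - 1 - (i + 1) = 1 := fin_val_eq_one h'
      have h3 : ((3 : ℕ) : Fin (m + 5)) = 0 := by push_cast; linear_combination -h''
      exact fin_cast_ne_zero (by norm_num) (by omega) h3
    · have h'' : i + 1 - (i - 1) = 1 := fin_val_eq_one h'
      have h3 : ((1 : ℕ) : Fin (m + 5)) = 0 := by push_cast; linear_combination h''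
      exact fin_cast_ne_zero (by norm_num) (by omega) h3
  omega

lemma walk_length_two {V : Type*} {G : SimpleGraph V} {u v : V} (P : G.Walk u v)
    (h : P.length = 2) : ∃ w, G.Adj u w ∧ G.Adj w v ∧ w ∈ P.support := by
  cases P with
  | nil => simp at h
  | cons h1 P' =>
    cases P' with
    | nil => simp at h
    | cons h2 P'' =>
      simp only [Walk.length_cons] at h
      obtain rfl := Walk.eq_of_length_eq_zero (p := P'') (by omega)
      exact ⟨_, h1, h2, by simp⟩



lemma cplus_adj_none {w : Option (Fin n)} (h : (CPlus n).Adj none w) :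
    ∃ k : Fin n, w = some k ∧ (k : ℕ) = 0 := by
  cases w with
  | none => exact absurd h ((CPlus n).loopless.irrefl _)
  | some k => exact ⟨k, rfl, cplus_adj_none_some.mp h⟩

lemma toCycleWalk : ∀ (m : ℕ) (u v : Option (Fin n)) (P : (CPlus n).Walk u v)
    (_ : P.length = m) (i j : Fin n) (_ : u = some i) (_ : v = some j),
    ∃ Q : (cycleGraph n).Walk i j, Q.length ≤ m := by
  intro m
  induction m using Nat.strong_induction_on with
  | _ m ih =>
    intro u v P hP i j hu hv
    cases P with
    | nil =>
      subst hu
      obtain rfl : i = j := Option.some_injective _ hv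
      exact ⟨Walk.nil, Nat.zero_le _⟩
    | @cons _ w _ h P' =>
      subst hu hv
      simp only [Walk.length_cons] at hP
      cases w with
      | some k =>
        have hk : (cycleGraph n).Adj i k := cplus_adj_some.mp h
        obtain ⟨Q, hQ⟩ := ih P'.length (by omega) _ _ P' rfl k j rfl rfl
        exact ⟨Walk.cons hk Q, by simp only [Walk.length_cons]; omega⟩
      | none =>
        cases P' with
        | @cons _ w2 _ h2 P'' =>
          obtain ⟨k, rfl, hk0⟩ := cplus_adj_none h2
          have hik : i = k := Fin.ext (by rw [cplus_adj_some_none] at h; omega)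
          subst hik
          simp only [Walk.length_cons] at hP
          obtain ⟨Q, hQ⟩ := ih P''.length (by omega) _ _ P'' rfl i j rfl rfl
          exact ⟨Q, by omega⟩

lemma singleton_none_total {m : ℕ} :
    IsTotalMVSet (CPlus (m + 1)) {(none : Option (Fin (m + 1)))} := by
  intro u v
  obtain ⟨P, hP⟩ := (cplus_connected (m := m)).exists_walk_length_eq_dist u v
  match u, v with
  | none, v => exact ⟨P, hP, fun w _ hw => Or.inl hw⟩
  | some i, none => exact ⟨P, hP, fun w _ hw => Or.inr hw⟩
  | some i, some j =>
    obtain ⟨Q, hQ⟩ := toCycleWalk P.length _ _ P rfl i j rfl rfl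
    refine ⟨Q.map (someHom _), ?_, ?_⟩
    · have h1 := dist_le (Q.map (someHom (m + 1)))
      erw [Walk.length_map] at h1 ⊢
      simp only [someHom_apply] at h1
      omega
    · intro w hwsup hw
      rw [Set.mem_singleton_iff] at hw
      subst hw
      erw [Walk.support_map] at hwsup
      simp [someHom_apply] at hwsup


lemma total_subset {m : ℕ} {X : Set (Option (Fin (m + 5)))}
    (hX : IsTotalMVSet (CPlus (m + 5)) X) : X ⊆ {none} := by
  intro x hx
  cases x with
  | none => rfl
  | some i =>
    exfalso
    obtain ⟨P, hlen, hsupp⟩ := hX (some (i - 1)) (some (i + 1))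
    rw [cplus_dist_two] at hlen
    obtain ⟨w1, h1, h2, hmem⟩ := walk_length_two P hlen
    have hw1 : w1 = some i := by
      cases w1 with
      | none =>
        have e1 : ((i - 1 : Fin (m + 5)) : ℕ) = 0 := cplus_adj_some_none.mp h1
        have e2 : ((i + 1 : Fin (m + 5)) : ℕ) = 0 := cplus_adj_none_some.mp h2
        have heq : i - 1 = i + 1 := Fin.ext (by rw [e1, e2])
        have hc : ((2 : ℕ) : Fin (m + 5)) = 0 := by push_cast; linear_combination -heq
        exact absurd hc (fin_cast_ne_zero (by norm_num) (by omega))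
      | some k =>
        have c1 := cycleGraph_adj'.mp (cplus_adj_some.mp h1)
        have c2 := cycleGraph_adj'.mp (cplus_adj_some.mp h2)
        congr 1
        rcases c2 with h' | h'
        · have e2 : k - (i + 1) = 1 := fin_val_eq_one h'
          rcases c1 with h'' | h''
          · have e1 : i - 1 - k = 1 := fin_val_eq_one h''
            have hc : ((4 : ℕ) : Fin (m + 5)) = 0 := by
              push_cast; linear_combination -e1 - e2
            exact absurd hc (fin_cast_ne_zero (by norm_num) (by omega))
          · have e1 : k - (i - 1) = 1 := fin_val_eq_one h''
            have hc : ((2 : ℕ) : Fin (m + 5)) = 0 := by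
              push_cast; linear_combination e1 - e2
            exact absurd hc (fin_cast_ne_zero (by norm_num) (by omega))
        · have e2 : i + 1 - k = 1 := fin_val_eq_one h'
          linear_combination -e2
    subst hw1
    rcases hsupp _ hmem hx with h | h
    · have h' := Option.some_injective _ h
      have hc : ((1 : ℕ) : Fin (m + 5)) = 0 := by push_cast; linear_combination h'
      exact fin_cast_ne_zero (by norm_num) (by omega) hc
    · have h' := Option.some_injective _ h
      have hc : ((1 : ℕ) : Fin (m + 5)) = 0 := by push_cast; linear_combination -h'
      exact fin_cast_ne_zero (by norm_num) (by omega) hc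


end Aux

theorem stmt_16 (q : ℕ) (hq : 6 ≤ q) :
    muT (CPlus (q - 1)) = 1 ∧
    ∃ (V : Type) (G : SimpleGraph V), Finite V ∧ Nat.card V = q ∧
      G.Connected ∧ muT G = 1 := by
  obtain ⟨m, hm⟩ : ∃ m, q - 1 = m + 5 := ⟨q - 6, by omega⟩
  have key : muT (CPlus (q - 1)) = 1 := by
    rw [hm]
    unfold muT
    have h1 : (1 : ℕ) ∈ {k | ∃ X : Set (Option (Fin (m + 5))),
        IsTotalMVSet (CPlus (m + 5)) X ∧ X.ncard = k} :=
      ⟨{none}, singleton_none_total (m := m + 4), Set.ncard_singleton _⟩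
    have hbdd : ∀ k ∈ {k | ∃ X : Set (Option (Fin (m + 5))),
        IsTotalMVSet (CPlus (m + 5)) X ∧ X.ncard = k}, k ≤ 1 := by
      rintro k ⟨X, hX, rfl⟩
      calc X.ncard ≤ ({none} : Set (Option (Fin (m + 5)))).ncard :=
            Set.ncard_le_ncard (total_subset hX) (Set.finite_singleton _)
        _ = 1 := Set.ncard_singleton _
    exact le_antisymm (csSup_le ⟨1, h1⟩ hbdd) (le_csSup ⟨1, hbdd⟩ h1)
  refine ⟨key, Option (Fin (q - 1)), CPlus (q - 1), inferInstance, ?_, ?_, key⟩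
  · simp [Nat.card_eq_fintype_card]
    omega
  · rw [hm]
    exact cplus_connected (m := m + 4)
end

section
/- For every integer k ≥ 5, let F_k be the graph with vertex set {z} ∪ {x_1,…,x_k} ∪ {y_1,…,y_{2k}} and edges z x_i (i ∈ [k]), x_i y_{2i−1}, x_i y_{2i} (i ∈ [k]), and y_j y_{j+1} (j ∈ [2k−1]). Then μ_t(F_k) = 2 and μ_d(F_k) = 3. -/
open SimpleGraph

/-- relation underlying the graph `F_k`; with `z = none`,
`x i = some (Sum.inl i)` (i ∈ [k], 0-indexed) and `y j = some (Sum.inr j)`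
(j ∈ [2k], 0-indexed), the edges are exactly `z x_i`, `x_i y_{2i}`, `x_i y_{2i+1}`
and `y_j y_{j+1}`. -/
def Frel (k : ℕ) : Option (Fin k ⊕ Fin (2 * k)) → Option (Fin k ⊕ Fin (2 * k)) → Prop
  | none, some (Sum.inl _) => True
  | some (Sum.inl i), some (Sum.inr j) => (j : ℕ) = 2 * (i : ℕ) ∨ (j : ℕ) = 2 * (i : ℕ) + 1
  | some (Sum.inr j), some (Sum.inr j') => (j' : ℕ) = (j : ℕ) + 1
  | _, _ => False

/-- the graph `F_k` from the paper -/
def Fgraph (k : ℕ) : SimpleGraph (Option (Fin k ⊕ Fin (2 * k))) := SimpleGraph.fromRel (Frel k)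

namespace Fk
variable {k : ℕ}

abbrev V (k : ℕ) := Option (Fin k ⊕ Fin (2 * k))
abbrev zz : V k := none
abbrev xx (a : Fin k) : V k := some (Sum.inl a)
abbrev yy (j : Fin (2*k)) : V k := some (Sum.inr j)

@[simp] lemma adj_zz : ¬ (Fgraph k).Adj zz zz := by simp [Fgraph]
@[simp] lemma adj_zx (a : Fin k) : (Fgraph k).Adj zz (xx a) := by
  simp [Fgraph, fromRel_adj, Frel]
@[simp] lemma adj_xz (a : Fin k) : (Fgraph k).Adj (xx a) zz := by
  simp [Fgraph, fromRel_adj, Frel]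
@[simp] lemma adj_zy (j : Fin (2*k)) : ¬ (Fgraph k).Adj zz (yy j) := by
  simp [Fgraph, fromRel_adj, Frel]
@[simp] lemma adj_yz (j : Fin (2*k)) : ¬ (Fgraph k).Adj (yy j) zz := by
  simp [Fgraph, fromRel_adj, Frel]
@[simp] lemma adj_xx (a b : Fin k) : ¬ (Fgraph k).Adj (xx a) (xx b) := by
  simp [Fgraph, fromRel_adj, Frel]
@[simp] lemma adj_xy (a : Fin k) (j : Fin (2*k)) :
    (Fgraph k).Adj (xx a) (yy j) ↔ ((j:ℕ) = 2*a ∨ (j:ℕ) = 2*a+1) := by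
  simp [Fgraph, fromRel_adj, Frel]
@[simp] lemma adj_yx (a : Fin k) (j : Fin (2*k)) :
    (Fgraph k).Adj (yy j) (xx a) ↔ ((j:ℕ) = 2*a ∨ (j:ℕ) = 2*a+1) := by
  simp [Fgraph, fromRel_adj, Frel]
@[simp] lemma adj_yy (i j : Fin (2*k)) :
    (Fgraph k).Adj (yy i) (yy j) ↔ ((j:ℕ) = i+1 ∨ (i:ℕ) = j+1) := by
  constructor
  · rintro h
    rcases (fromRel_adj _ _ _).1 h with ⟨-, h | h⟩
    · left; exact h
    · right; exact h
  · rintro h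
    refine (fromRel_adj _ _ _).2 ⟨?_, ?_⟩
    · simp only [ne_eq, Option.some.injEq, Sum.inr.injEq]
      rintro rfl; omega
    · rcases h with h | h
      · exact Or.inl h
      · exact Or.inr h
def dxy {k : ℕ} (a : Fin k) (j : Fin (2*k)) : ℕ :=
  if (j:ℕ) = 2*a ∨ (j:ℕ) = 2*a+1 then 1
  else if (j:ℕ)+1 = 2*a ∨ (j:ℕ) = 2*a+2 then 2 else 3

def D {k : ℕ} : V k → V k → ℕ
  | none, none => 0
  | none, some (.inl _) => 1
  | some (.inl _), none => 1
  | none, some (.inr _) => 2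
  | some (.inr _), none => 2
  | some (.inl a), some (.inl b) => if (a:ℕ) = (b:ℕ) then 0 else 2
  | some (.inl a), some (.inr j) => dxy a j
  | some (.inr j), some (.inl a) => dxy a j
  | some (.inr i), some (.inr j) => min (max (i:ℕ) (j:ℕ) - min (i:ℕ) (j:ℕ)) 4

lemma D_self (u : V k) : D u u = 0 := by
  rcases u with _ | (a | j) <;> simp [D]

lemma D_comm (u v : V k) : D u v = D v u := by
  rcases u with _ | (a | i) <;> rcases v with _ | (b | j) <;>
    simp [D, eq_comm, Nat.max_comm, Nat.min_comm]

lemma Dstep {u w : V k} (h : (Fgraph k).Adj u w) (v : V k) : D u v ≤ D w v + 1 := by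
  rcases u with _ | (a | i) <;> rcases w with _ | (b | m)
  · simp at h
  · rcases v with _ | (c | j) <;> simp only [D, dxy] <;>
      first | omega | (split_ifs <;> omega)
  · exact absurd h (adj_zy _)
  · rcases v with _ | (c | j) <;> simp only [D, dxy] <;>
      first | omega | (split_ifs <;> omega)
  · exact absurd h (adj_xx _ _)
  · rw [adj_xy] at h
    rcases v with _ | (c | j) <;> simp only [D, dxy] <;>
      first | omega | (split_ifs <;> omega)
  · exact absurd h (adj_yz _)
  · rw [adj_yx] at h
    rcases v with _ | (c | j) <;> simp only [D, dxy] <;>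
      first | omega | (split_ifs <;> omega)
  · rw [adj_yy] at h
    rcases v with _ | (c | j) <;> simp only [D, dxy] <;>
      first | omega | (split_ifs <;> omega)
def Mid (u v w : V k) : Prop :=
  w = zz ∨
  (∃ (c : Fin k) (j : Fin (2*k)), w = xx c ∧ (u = yy j ∨ v = yy j) ∧
    ((j:ℕ) = 2*c ∨ (j:ℕ) = 2*c+1)) ∨
  (∃ (m i j : Fin (2*k)), w = yy m ∧ ((u = yy i ∧ v = yy j) ∨ (u = yy j ∧ v = yy i)) ∧
    ((i:ℕ) < m ∧ (m:ℕ) < j)) ∨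
  (∃ (m : Fin (2*k)) (a : Fin k) (j : Fin (2*k)), w = yy m ∧
    ((u = xx a ∧ v = yy j) ∨ (u = yy j ∧ v = xx a)) ∧
    (((j:ℕ)+1 = 2*a ∧ (m:ℕ) = 2*a) ∨ ((j:ℕ) = 2*a+2 ∧ (m:ℕ) = 2*a+1)))

lemma Mid_symm {u v w : V k} (h : Mid u v w) : Mid v u w := by
  rcases h with h | ⟨c, j, h1, h2, h3⟩ | ⟨m, i, j, h1, h2, h3⟩ | ⟨m, a, j, h1, h2, h3⟩
  · exact Or.inl h
  · exact Or.inr (Or.inl ⟨c, j, h1, h2.symm, h3⟩)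
  · exact Or.inr (Or.inr (Or.inl ⟨m, i, j, h1, by tauto, h3⟩))
  · exact Or.inr (Or.inr (Or.inr ⟨m, a, j, h1, by tauto, h3⟩))

def OkW (u v : V k) : Prop :=
  ∃ p : (Fgraph k).Walk u v, p.length = D u v ∧
    ∀ w ∈ p.support, w = u ∨ w = v ∨ Mid u v w

lemma OkW_symm {u v : V k} (h : OkW u v) : OkW v u := by
  obtain ⟨p, h1, h2⟩ := h
  refine ⟨p.reverse, ?_, ?_⟩
  · rw [SimpleGraph.Walk.length_reverse, h1, D_comm]
  · intro w hw
    rw [SimpleGraph.Walk.support_reverse, List.mem_reverse] at hw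
    rcases h2 w hw with h | h | h
    · exact Or.inr (Or.inl h)
    · exact Or.inl h
    · exact Or.inr (Or.inr (Mid_symm h))

lemma exYY (i j : Fin (2*k)) (hij : (i:ℕ) ≤ j) : OkW (yy i) (yy j) := by
  have hj := j.isLt
  have hi := i.isLt
  rcases Nat.lt_or_ge (j:ℕ) (i+4) with hg | hg
  · rcases Nat.lt_or_ge (j:ℕ) (i+2) with hg1 | hg1
    · rcases Nat.lt_or_ge (j:ℕ) (i+1) with hg0 | hg0
      · have : i = j := Fin.ext (by omega)
        subst this
        exact ⟨.nil, by simp [D], by simp⟩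
      · -- gap 1
        refine ⟨.cons (by rw [adj_yy]; omega) .nil, ?_, ?_⟩
        · simp only [SimpleGraph.Walk.length_cons, SimpleGraph.Walk.length_nil, D]; omega
        · intro w hw; simp [SimpleGraph.Walk.support_cons] at hw
          rcases hw with rfl | rfl
          · exact Or.inl rfl
          · exact Or.inr (Or.inl rfl)
    · rcases Nat.lt_or_ge (j:ℕ) (i+3) with hg2 | hg2
      · -- gap 2
        obtain ⟨m1, hm1⟩ : ∃ m : Fin (2*k), (m:ℕ) = (i:ℕ)+1 := ⟨⟨_, by omega⟩, rfl⟩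
        refine ⟨.cons (v := yy m1) (by rw [adj_yy]; omega)
            (.cons (by rw [adj_yy]; omega) .nil), ?_, ?_⟩
        · simp only [SimpleGraph.Walk.length_cons, SimpleGraph.Walk.length_nil, D]; omega
        · intro w hw; simp [SimpleGraph.Walk.support_cons] at hw
          rcases hw with rfl | rfl | rfl
          · exact Or.inl rfl
          · exact Or.inr (Or.inr (Or.inr (Or.inr (Or.inl
              ⟨m1, i, j, rfl, Or.inl ⟨rfl, rfl⟩, by omega⟩))))
          · exact Or.inr (Or.inl rfl)
      · -- gap 3
        obtain ⟨m1, hm1⟩ : ∃ m : Fin (2*k), (m:ℕ) = (i:ℕ)+1 := ⟨⟨_, by omega⟩, rfl⟩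
        obtain ⟨m2, hm2⟩ : ∃ m : Fin (2*k), (m:ℕ) = (i:ℕ)+2 := ⟨⟨_, by omega⟩, rfl⟩
        refine ⟨.cons (v := yy m1) (by rw [adj_yy]; omega)
            (.cons (v := yy m2) (by rw [adj_yy]; omega)
            (.cons (by rw [adj_yy]; omega) .nil)), ?_, ?_⟩
        · simp only [SimpleGraph.Walk.length_cons, SimpleGraph.Walk.length_nil, D]; omega
        · intro w hw; simp [SimpleGraph.Walk.support_cons] at hw
          rcases hw with rfl | rfl | rfl | rfl
          · exact Or.inl rfl
          · exact Or.inr (Or.inr (Or.inr (Or.inr (Or.inl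
              ⟨m1, i, j, rfl, Or.inl ⟨rfl, rfl⟩, by omega⟩))))
          · exact Or.inr (Or.inr (Or.inr (Or.inr (Or.inl
              ⟨m2, i, j, rfl, Or.inl ⟨rfl, rfl⟩, by omega⟩))))
          · exact Or.inr (Or.inl rfl)
  · -- gap ≥ 4 : via z
    obtain ⟨c1, hc1⟩ : ∃ c : Fin k, (c:ℕ) = (i:ℕ)/2 := ⟨⟨_, by omega⟩, rfl⟩
    obtain ⟨c2, hc2⟩ : ∃ c : Fin k, (c:ℕ) = (j:ℕ)/2 := ⟨⟨_, by omega⟩, rfl⟩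
    refine ⟨.cons (v := xx c1) (by rw [adj_yx]; omega)
        (.cons (v := zz) (adj_xz _)
        (.cons (v := xx c2) (adj_zx _)
        (.cons (by rw [adj_xy]; omega) .nil))), ?_, ?_⟩
    · simp only [SimpleGraph.Walk.length_cons, SimpleGraph.Walk.length_nil, D]; omega
    · intro w hw; simp [SimpleGraph.Walk.support_cons] at hw
      rcases hw with rfl | rfl | rfl | rfl | rfl
      · exact Or.inl rfl
      · exact Or.inr (Or.inr (Or.inr (Or.inl ⟨c1, i, rfl, Or.inl rfl, by omega⟩)))
      · exact Or.inr (Or.inr (Or.inl rfl))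
      · exact Or.inr (Or.inr (Or.inr (Or.inl ⟨c2, j, rfl, Or.inr rfl, by omega⟩)))
      · exact Or.inr (Or.inl rfl)

lemma exXY (a : Fin k) (j : Fin (2*k)) : OkW (xx a) (yy j) := by
  have hj := j.isLt
  have ha := a.isLt
  by_cases h1 : (j:ℕ) = 2*a ∨ (j:ℕ) = 2*a+1
  · refine ⟨.cons (by rw [adj_xy]; omega) .nil, ?_, ?_⟩
    · simp only [SimpleGraph.Walk.length_cons, SimpleGraph.Walk.length_nil, D, dxy]
      rw [if_pos h1]
    · intro w hw; simp [SimpleGraph.Walk.support_cons] at hw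
      rcases hw with rfl | rfl
      · exact Or.inl rfl
      · exact Or.inr (Or.inl rfl)
  · by_cases h2 : (j:ℕ)+1 = 2*a ∨ (j:ℕ) = 2*a+2
    · obtain ⟨m1, hm1⟩ : ∃ m : Fin (2*k), ((j:ℕ)+1 = 2*a ∧ (m:ℕ) = 2*a) ∨
          ((j:ℕ) = 2*a+2 ∧ (m:ℕ) = 2*a+1) := by
        rcases h2 with h2 | h2
        · exact ⟨⟨2*a, by omega⟩, Or.inl ⟨h2, rfl⟩⟩
        · exact ⟨⟨2*a+1, by omega⟩, Or.inr ⟨h2, rfl⟩⟩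
      refine ⟨.cons (v := yy m1) (by rw [adj_xy]; omega)
          (.cons (by rw [adj_yy]; omega) .nil), ?_, ?_⟩
      · simp only [SimpleGraph.Walk.length_cons, SimpleGraph.Walk.length_nil, D, dxy]
        rw [if_neg h1, if_pos h2]
      · intro w hw; simp [SimpleGraph.Walk.support_cons] at hw
        rcases hw with rfl | rfl | rfl
        · exact Or.inl rfl
        · exact Or.inr (Or.inr (Or.inr (Or.inr (Or.inr
            ⟨m1, a, j, rfl, Or.inl ⟨rfl, rfl⟩, hm1⟩))))
        · exact Or.inr (Or.inl rfl)
    · obtain ⟨c2, hc2⟩ : ∃ c : Fin k, (c:ℕ) = (j:ℕ)/2 := ⟨⟨_, by omega⟩, rfl⟩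
      refine ⟨.cons (v := zz) (adj_xz _)
          (.cons (v := xx c2) (adj_zx _)
          (.cons (by rw [adj_xy]; omega) .nil)), ?_, ?_⟩
      · simp only [SimpleGraph.Walk.length_cons, SimpleGraph.Walk.length_nil, D, dxy]
        rw [if_neg h1, if_neg h2]
      · intro w hw; simp [SimpleGraph.Walk.support_cons] at hw
        rcases hw with rfl | rfl | rfl | rfl
        · exact Or.inl rfl
        · exact Or.inr (Or.inr (Or.inl rfl))
        · exact Or.inr (Or.inr (Or.inr (Or.inl ⟨c2, j, rfl, Or.inr rfl, by omega⟩)))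
        · exact Or.inr (Or.inl rfl)

lemma exZY (j : Fin (2*k)) (hk : 0 < k) : OkW (zz : V k) (yy j) := by
  have hj := j.isLt
  obtain ⟨c2, hc2⟩ : ∃ c : Fin k, (c:ℕ) = (j:ℕ)/2 := ⟨⟨_, by omega⟩, rfl⟩
  refine ⟨.cons (v := xx c2) (adj_zx _) (.cons (by rw [adj_xy]; omega) .nil), ?_, ?_⟩
  · simp only [SimpleGraph.Walk.length_cons, SimpleGraph.Walk.length_nil, D]
  · intro w hw; simp [SimpleGraph.Walk.support_cons] at hw
    rcases hw with rfl | rfl | rfl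
    · exact Or.inl rfl
    · exact Or.inr (Or.inr (Or.inr (Or.inl ⟨c2, j, rfl, Or.inr rfl, by omega⟩)))
    · exact Or.inr (Or.inl rfl)

lemma exWalk (hk : 0 < k) (u v : V k) : OkW u v := by
  rcases u with _ | (a | i) <;> rcases v with _ | (b | j)
  · exact ⟨.nil, by simp [D], by simp⟩
  · refine ⟨.cons (adj_zx _) .nil, by simp [D], ?_⟩
    intro w hw; simp [SimpleGraph.Walk.support_cons] at hw
    rcases hw with rfl | rfl
    · exact Or.inl rfl
    · exact Or.inr (Or.inl rfl)
  · exact exZY j hk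
  · exact OkW_symm ⟨.cons (adj_zx _) .nil, by simp [D], by
      intro w hw; simp [SimpleGraph.Walk.support_cons] at hw
      rcases hw with rfl | rfl
      · exact Or.inl rfl
      · exact Or.inr (Or.inl rfl)⟩
  · by_cases hab : (a:ℕ) = (b:ℕ)
    · have : a = b := Fin.ext hab
      subst this
      exact ⟨.nil, by simp [D], by simp⟩
    · refine ⟨.cons (v := zz) (adj_xz _) (.cons (adj_zx _) .nil), ?_, ?_⟩
      · simp only [SimpleGraph.Walk.length_cons, SimpleGraph.Walk.length_nil, D]
        rw [if_neg hab]
      · intro w hw; simp [SimpleGraph.Walk.support_cons] at hw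
        rcases hw with rfl | rfl | rfl
        · exact Or.inl rfl
        · exact Or.inr (Or.inr (Or.inl rfl))
        · exact Or.inr (Or.inl rfl)
  · exact exXY a j
  · exact OkW_symm (exZY i hk)
  · exact OkW_symm (exXY b i)
  · rcases le_or_gt (i:ℕ) (j:ℕ) with h | h
    · exact exYY i j h
    · exact OkW_symm (exYY j i h.le)

lemma D_le_walk {u v : V k} (p : (Fgraph k).Walk u v) : D u v ≤ p.length := by
  induction p with
  | nil => simp [D_self]
  | @cons a b c h q ih =>
    have := Dstep h c
    simp only [SimpleGraph.Walk.length_cons]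
    omega

lemma reach (hk : 0 < k) (u v : V k) : (Fgraph k).Reachable u v := by
  obtain ⟨p, -, -⟩ := exWalk hk u v
  exact ⟨p⟩

lemma dist_eq (hk : 0 < k) (u v : V k) : (Fgraph k).dist u v = D u v := by
  refine le_antisymm ?_ ?_
  · obtain ⟨p, hp, -⟩ := exWalk hk u v
    calc (Fgraph k).dist u v ≤ p.length := SimpleGraph.dist_le p
    _ = D u v := hp
  · obtain ⟨p, hp⟩ := (reach hk u v).exists_walk_length_eq_dist
    calc D u v ≤ p.length := D_le_walk p
    _ = _ := hp

lemma second_vertex {u v : V k} (hk : 0 < k) (p : (Fgraph k).Walk u v)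
    (hp : p.length = (Fgraph k).dist u v) (h0 : 0 < D u v) :
    ∃ w, w ∈ p.support ∧ (Fgraph k).Adj u w ∧ D w v + 1 = D u v := by
  cases p with
  | nil =>
    rw [dist_eq hk] at hp
    simp at hp; omega
  | cons h q =>
    rename_i w
    refine ⟨w, ?_, h, ?_⟩
    · simp [SimpleGraph.Walk.support_cons]
    · rw [dist_eq hk] at hp
      simp only [SimpleGraph.Walk.length_cons] at hp
      have h1 := D_le_walk q
      have h2 := Dstep h v
      omega

lemma vis_symm {V' : Type*} {G : SimpleGraph V'} {X : Set V'} {u v : V'}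
    (h : IsMVisible G X u v) : IsMVisible G X v u := by
  obtain ⟨p, h1, h2⟩ := h
  refine ⟨p.reverse, ?_, ?_⟩
  · rw [SimpleGraph.Walk.length_reverse, h1, SimpleGraph.dist_comm]
  · intro w hw hX
    rw [SimpleGraph.Walk.support_reverse, List.mem_reverse] at hw
    exact (h2 w hw hX).symm

lemma adj_z_cases {w : V k} (h : (Fgraph k).Adj zz w) : ∃ c, w = xx c := by
  rcases w with _ | (c | m)
  · simp at h
  · exact ⟨c, rfl⟩
  · exact absurd h (adj_zy m)

lemma adj_x_cases {a : Fin k} {w : V k} (h : (Fgraph k).Adj (xx a) w) :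
    w = zz ∨ ∃ j : Fin (2*k), w = yy j ∧ ((j:ℕ) = 2*a ∨ (j:ℕ) = 2*a+1) := by
  rcases w with _ | (c | m)
  · exact Or.inl rfl
  · exact absurd h (adj_xx a c)
  · exact Or.inr ⟨m, rfl, (adj_xy a m).1 h⟩

lemma adj_y_cases {i : Fin (2*k)} {w : V k} (h : (Fgraph k).Adj (yy i) w) :
    (∃ c : Fin k, w = xx c ∧ ((i:ℕ) = 2*c ∨ (i:ℕ) = 2*c+1)) ∨
    (∃ m : Fin (2*k), w = yy m ∧ ((m:ℕ) = i+1 ∨ (i:ℕ) = m+1)) := by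
  rcases w with _ | (c | m)
  · exact absurd h (adj_yz i)
  · exact Or.inl ⟨c, rfl, (adj_yx c i).1 h⟩
  · exact Or.inr ⟨m, rfl, (adj_yy i m).1 h⟩

lemma not_vis {X : Set (V k)} {u v : V k} (hk : 0 < k)
    (hvis : IsMVisible (Fgraph k) X u v) (hD : 2 ≤ D u v)
    (hforce : ∀ w, (Fgraph k).Adj u w → D w v + 1 = D u v → w ∈ X) : False := by
  obtain ⟨p, hp, havoid⟩ := hvis
  obtain ⟨w, hws, hadj, hDw⟩ := second_vertex hk p hp (by omega)
  rcases havoid w hws (hforce w hadj hDw) with rfl | rfl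
  · exact (Fgraph k).loopless.irrefl _ hadj
  · rw [D_self] at hDw; omega

-- z is interior-forced between two distinct x's
lemma BP_xzx {X : Set (V k)} (hk : 0 < k) {a b : Fin k} (hab : (a:ℕ) ≠ b)
    (hz : zz ∈ X) (hvis : IsMVisible (Fgraph k) X (xx a) (xx b)) : False := by
  refine not_vis hk hvis (by simp only [D]; rw [if_neg hab]) ?_
  intro w hadj hD
  rcases adj_x_cases hadj with rfl | ⟨j, rfl, hj⟩
  · exact hz
  · exfalso
    simp only [D, dxy] at hD
    split_ifs at hD <;> omega

-- x_a is interior-forced between z and y_j for j ∈ {2a, 2a+1}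
lemma BP_zxy {X : Set (V k)} (hk : 0 < k) {a : Fin k} {j : Fin (2*k)}
    (hj : (j:ℕ) = 2*a ∨ (j:ℕ) = 2*a+1)
    (hx : xx a ∈ X) (hvis : IsMVisible (Fgraph k) X zz (yy j)) : False := by
  refine not_vis hk hvis (by simp only [D]; omega) ?_
  intro w hadj hD
  obtain ⟨c, rfl⟩ := adj_z_cases hadj
  simp only [D, dxy] at hD
  have : (c:ℕ) = a := by split_ifs at hD <;> omega
  have : c = a := Fin.ext this
  subst this
  exact hx

-- y_m forced between x_a and y_j when d(x_a, y_j) = 2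
lemma BP_xyy {X : Set (V k)} (hk : 0 < k) {a : Fin k} {j m : Fin (2*k)}
    (h : ((j:ℕ)+1 = 2*a ∧ (m:ℕ) = 2*a) ∨ ((j:ℕ) = 2*a+2 ∧ (m:ℕ) = 2*a+1))
    (hm : yy m ∈ X) (hvis : IsMVisible (Fgraph k) X (xx a) (yy j)) : False := by
  refine not_vis hk hvis (by simp only [D, dxy]; split_ifs <;> omega) ?_
  intro w hadj hD
  rcases adj_x_cases hadj with rfl | ⟨j', rfl, hj'⟩
  · exfalso; simp only [D, dxy] at hD; split_ifs at hD <;> omega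
  · simp only [D, dxy, Nat.max_def, Nat.min_def] at hD
    have : (j':ℕ) = m := by split_ifs at hD <;> omega
    have : j' = m := Fin.ext this
    subst this
    exact hm

-- gap 2 between y's: midpoint forced
lemma BP_gap2 {X : Set (V k)} (hk : 0 < k) {i j m : Fin (2*k)}
    (hij : (j:ℕ) = i + 2) (hm : (m:ℕ) = i + 1)
    (hmX : yy m ∈ X) (hvis : IsMVisible (Fgraph k) X (yy i) (yy j)) : False := by
  refine not_vis hk hvis (by simp only [D]; omega) ?_
  intro w hadj hD
  rcases adj_y_cases hadj with ⟨c, rfl, hc⟩ | ⟨m', rfl, hm'⟩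
  · exfalso
    simp only [D, dxy] at hD
    split_ifs at hD <;> omega
  · simp only [D] at hD
    have : (m':ℕ) = m := by omega
    have : m' = m := Fin.ext this
    subst this
    exact hmX

-- gap 3 upward: second vertex is y_{i+1}
lemma BP_gap3 {X : Set (V k)} (hk : 0 < k) {i j m : Fin (2*k)}
    (hij : (j:ℕ) = i + 3) (hm : (m:ℕ) = i + 1)
    (hmX : yy m ∈ X) (hvis : IsMVisible (Fgraph k) X (yy i) (yy j)) : False := by
  refine not_vis hk hvis (by simp only [D]; omega) ?_
  intro w hadj hD
  rcases adj_y_cases hadj with ⟨c, rfl, hc⟩ | ⟨m', rfl, hm'⟩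
  · exfalso
    simp only [D, dxy] at hD
    split_ifs at hD <;> omega
  · simp only [D] at hD
    have : (m':ℕ) = m := by omega
    have : m' = m := Fin.ext this
    subst this
    exact hmX

-- gap 3 downward: second vertex is y_{i-1}
lemma BP_gap3d {X : Set (V k)} (hk : 0 < k) {i j m : Fin (2*k)}
    (hij : (i:ℕ) = j + 3) (hm : (m:ℕ) + 1 = i)
    (hmX : yy m ∈ X) (hvis : IsMVisible (Fgraph k) X (yy i) (yy j)) : False := by
  refine not_vis hk hvis (by simp only [D]; omega) ?_
  intro w hadj hD
  rcases adj_y_cases hadj with ⟨c, rfl, hc⟩ | ⟨m', rfl, hm'⟩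
  · exfalso
    simp only [D, dxy] at hD
    split_ifs at hD <;> omega
  · simp only [D] at hD
    have : (m':ℕ) = m := by omega
    have : m' = m := Fin.ext this
    subst this
    exact hmX

-- gap 4 upward: second vertex is y_{i+1} or x_c with i ∈ {2c, 2c+1}
lemma BP_gap4 {X : Set (V k)} (hk : 0 < k) {i j m : Fin (2*k)}
    (hij : (j:ℕ) = i + 4) (hm : (m:ℕ) = i + 1)
    (hmX : yy m ∈ X) (hxX : ∀ c : Fin k, ((i:ℕ) = 2*c ∨ (i:ℕ) = 2*c+1) → xx c ∈ X)
    (hvis : IsMVisible (Fgraph k) X (yy i) (yy j)) : False := by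
  refine not_vis hk hvis (by simp only [D]; omega) ?_
  intro w hadj hD
  rcases adj_y_cases hadj with ⟨c, rfl, hc⟩ | ⟨m', rfl, hm'⟩
  · exact hxX c hc
  · simp only [D] at hD
    have : (m':ℕ) = m := by omega
    have : m' = m := Fin.ext this
    subst this
    exact hmX

-- gap 4 downward
lemma BP_gap4d {X : Set (V k)} (hk : 0 < k) {i j m : Fin (2*k)}
    (hij : (i:ℕ) = j + 4) (hm : (m:ℕ) + 1 = i)
    (hmX : yy m ∈ X) (hxX : ∀ c : Fin k, ((i:ℕ) = 2*c ∨ (i:ℕ) = 2*c+1) → xx c ∈ X)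
    (hvis : IsMVisible (Fgraph k) X (yy i) (yy j)) : False := by
  refine not_vis hk hvis (by simp only [D]; omega) ?_
  intro w hadj hD
  rcases adj_y_cases hadj with ⟨c, rfl, hc⟩ | ⟨m', rfl, hm'⟩
  · exact hxX c hc
  · simp only [D] at hD
    have : (m':ℕ) = m := by omega
    have : m' = m := Fin.ext this
    subst this
    exact hmX

-- gap ≥ 5: second vertex is x_c with i ∈ {2c, 2c+1}
lemma BP_gap5 {X : Set (V k)} (hk : 0 < k) {i j : Fin (2*k)}
    (hij : (j:ℕ) + 5 ≤ i ∨ (i:ℕ) + 5 ≤ j)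
    (hxX : ∀ c : Fin k, ((i:ℕ) = 2*c ∨ (i:ℕ) = 2*c+1) → xx c ∈ X)
    (hvis : IsMVisible (Fgraph k) X (yy i) (yy j)) : False := by
  refine not_vis hk hvis (by simp only [D]; omega) ?_
  intro w hadj hD
  rcases adj_y_cases hadj with ⟨c, rfl, hc⟩ | ⟨m', rfl, hm'⟩
  · exact hxX c hc
  · exfalso
    simp only [D] at hD
    omega

lemma yy_inj {i j : Fin (2*k)} : (yy i : V k) = yy j ↔ (i:ℕ) = j := by
  simp [Fin.ext_iff]

lemma xx_inj {a b : Fin k} : (xx a : V k) = xx b ↔ (a:ℕ) = b := by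
  simp [Fin.ext_iff]

lemma vis_self {X : Set (V k)} (u : V k) : IsMVisible (Fgraph k) X u u :=
  ⟨.nil, by simp [SimpleGraph.dist_self], by simp⟩

lemma vis_edge {X : Set (V k)} (hk : 0 < k) {u v : V k}
    (h : (Fgraph k).Adj u v) (hD : D u v = 1) : IsMVisible (Fgraph k) X u v := by
  refine ⟨.cons h .nil, by rw [dist_eq hk, hD]; simp, ?_⟩
  intro w hw _
  simp [SimpleGraph.Walk.support_cons] at hw
  rcases hw with rfl | rfl
  · exact Or.inl rfl
  · exact Or.inr rfl

lemma total_subset (hk : 5 ≤ k) {X : Set (V k)} (hX : IsTotalMVSet (Fgraph k) X) :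
    X ⊆ {yy ⟨0, by omega⟩, yy ⟨2*k-1, by omega⟩} := by
  have hk0 : 0 < k := by omega
  intro u hu
  simp only [Set.mem_insert_iff, Set.mem_singleton_iff]
  rcases u with _ | (a | m)
  · exfalso
    exact BP_xzx hk0 (a := ⟨0, by omega⟩) (b := ⟨1, by omega⟩) (by simp) hu
      (hX (xx ⟨0, by omega⟩) (xx ⟨1, by omega⟩))
  · exfalso
    have ha := a.isLt
    exact BP_zxy hk0 (j := ⟨2*a, by omega⟩) (Or.inl rfl) hu (hX zz (yy ⟨2*a, by omega⟩))
  · have hm := m.isLt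
    by_cases h0 : (m:ℕ) = 0
    · left; rw [yy_inj]; simp [h0]
    · by_cases h1 : (m:ℕ) = 2*k-1
      · right; rw [yy_inj]; simp [h1]
      · exfalso
        exact BP_gap2 hk0 (i := ⟨(m:ℕ)-1, by omega⟩) (j := ⟨(m:ℕ)+1, by omega⟩) (m := m)
          (by simp; omega) (by simp; omega) hu
          (hX (yy ⟨(m:ℕ)-1, by omega⟩) (yy ⟨(m:ℕ)+1, by omega⟩))

lemma total_example (hk : 5 ≤ k) :
    IsTotalMVSet (Fgraph k) {yy ⟨0, by omega⟩, yy ⟨2*k-1, by omega⟩} := by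
  have hk0 : 0 < k := by omega
  intro u v
  obtain ⟨p, hlen, hmid⟩ := exWalk hk0 u v
  refine ⟨p, by rw [dist_eq hk0]; exact hlen, ?_⟩
  intro w hw hwX
  rcases hmid w hw with rfl | rfl | hm
  · exact Or.inl rfl
  · exact Or.inr rfl
  · exfalso
    simp only [Set.mem_insert_iff, Set.mem_singleton_iff] at hwX
    rcases hm with rfl | ⟨c, j, rfl, -, -⟩ | ⟨m, i, j, rfl, -, h3⟩ | ⟨m, a, j, rfl, hside, h3⟩
    · rcases hwX with h | h <;> simp [zz, yy] at h
    · rcases hwX with h | h <;> simp [xx, yy] at h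
    · have hj := j.isLt
      rcases hwX with h | h <;> rw [yy_inj] at h <;> simp at h <;> omega
    · have hj := j.isLt
      have ha := a.isLt
      rcases hwX with h | h <;> rw [yy_inj] at h <;> simp at h <;> omega

lemma muT_value (hk : 5 ≤ k) : muT (Fgraph k) = 2 := by
  have hk0 : 0 < k := by omega
  have hne : (yy ⟨0, by omega⟩ : V k) ≠ yy ⟨2*k-1, by omega⟩ := by
    rw [Ne, yy_inj]; simp; omega
  have hmem : 2 ∈ {n | ∃ X : Set (V k), IsTotalMVSet (Fgraph k) X ∧ X.ncard = n} :=
    ⟨_, total_example hk, Set.ncard_pair hne⟩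
  have hub : ∀ n ∈ {n | ∃ X : Set (V k), IsTotalMVSet (Fgraph k) X ∧ X.ncard = n}, n ≤ 2 := by
    rintro n ⟨X, hX, rfl⟩
    calc X.ncard ≤ ({yy ⟨0, by omega⟩, yy ⟨2*k-1, by omega⟩} : Set (V k)).ncard :=
          Set.ncard_le_ncard (total_subset hk hX) (Set.toFinite _)
    _ = 2 := Set.ncard_pair hne
  exact le_antisymm (csSup_le ⟨2, hmem⟩ hub) (le_csSup ⟨2, hub⟩ hmem)

lemma dual_example (hk : 5 ≤ k) :
    IsDualMVSet (Fgraph k)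
      {xx ⟨0, by omega⟩, yy ⟨0, by omega⟩, yy ⟨1, by omega⟩} := by
  have hk0 : 0 < k := by omega
  constructor
  · -- pairs inside X: all pairwise adjacent
    intro u hu v hv
    simp only [Set.mem_insert_iff, Set.mem_singleton_iff] at hu hv
    rcases hu with rfl | rfl | rfl <;> rcases hv with rfl | rfl | rfl
    · exact vis_self _
    · exact vis_edge hk0 (by rw [adj_xy]; simp) (by simp [D, dxy])
    · exact vis_edge hk0 (by rw [adj_xy]; simp) (by simp [D, dxy])
    · exact vis_edge hk0 (by rw [adj_yx]; simp) (by simp [D, dxy])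
    · exact vis_self _
    · exact vis_edge hk0 (by rw [adj_yy]; simp) (by simp [D])
    · exact vis_edge hk0 (by rw [adj_yx]; simp) (by simp [D, dxy])
    · exact vis_edge hk0 (by rw [adj_yy]; simp) (by simp [D])
    · exact vis_self _
  · -- pairs outside X
    intro u hu v hv
    obtain ⟨p, hlen, hmid⟩ := exWalk hk0 u v
    refine ⟨p, by rw [dist_eq hk0]; exact hlen, ?_⟩
    intro w hw hwX
    rcases hmid w hw with rfl | rfl | hm
    · exact Or.inl rfl
    · exact Or.inr rfl
    · exfalso
      simp only [Set.mem_insert_iff, Set.mem_singleton_iff] at hwX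
      rcases hm with rfl | ⟨c, j, rfl, hside, hj⟩ | ⟨m, i, j, rfl, hside, h3⟩ |
          ⟨m, a, j, rfl, hside, h3⟩
      · rcases hwX with h | h | h <;> simp [zz, xx, yy] at h
      · -- w = xx c, endpoint yy j with j ∈ {2c, 2c+1}
        have hc : (c:ℕ) = 0 := by
          rcases hwX with h | h | h
          · rwa [xx_inj] at h
          · simp [xx, yy] at h
          · simp [xx, yy] at h
        have hj01 : (j:ℕ) = 0 ∨ (j:ℕ) = 1 := by omega
        have : (yy j : V k) = yy ⟨0, by omega⟩ ∨ (yy j : V k) = yy ⟨1, by omega⟩ := by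
          rcases hj01 with h | h
          · left; rw [yy_inj]; simpa using h
          · right; rw [yy_inj]; simpa using h
        rcases hside with rfl | rfl
        · rcases this with h | h <;> rw [h] at hu <;> simp [Set.mem_insert_iff] at hu
        · rcases this with h | h <;> rw [h] at hv <;> simp [Set.mem_insert_iff] at hv
      · -- w = yy m strictly between y-endpoints
        have hm01 : (m:ℕ) = 0 ∨ (m:ℕ) = 1 := by
          rcases hwX with h | h | h
          · simp [xx, yy] at h
          · rw [yy_inj] at h; simp at h; omega
          · rw [yy_inj] at h; simp at h; omega
        have hi0 : (i:ℕ) = 0 := by omega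
        have : (yy i : V k) = yy ⟨0, by omega⟩ := by rw [yy_inj]; simpa using hi0
        rcases hside with ⟨rfl, -⟩ | ⟨-, rfl⟩
        · rw [this] at hu; simp [Set.mem_insert_iff] at hu
        · rw [this] at hv; simp [Set.mem_insert_iff] at hv
      · -- w = yy m adjacent to endpoint xx a
        have hm01 : (m:ℕ) = 0 ∨ (m:ℕ) = 1 := by
          rcases hwX with h | h | h
          · simp [xx, yy] at h
          · rw [yy_inj] at h; simp at h; omega
          · rw [yy_inj] at h; simp at h; omega
        have ha0 : (a:ℕ) = 0 := by omega
        have : (xx a : V k) = xx ⟨0, by omega⟩ := by rw [xx_inj]; simpa using ha0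
        rcases hside with ⟨rfl, -⟩ | ⟨-, rfl⟩
        · rw [this] at hu; simp [Set.mem_insert_iff] at hu
        · rw [this] at hv; simp [Set.mem_insert_iff] at hv

lemma dual_card (hk : 5 ≤ k) {X : Set (V k)} (hX : IsDualMVSet (Fgraph k) X) :
    X.ncard ≤ 3 := by
  have hk0 : 0 < k := by omega
  -- z is not in X
  have hz : zz ∉ X := by
    intro hz
    have same : ∀ a b : Fin k, (a:ℕ) ≠ b → xx a ∈ X → xx b ∈ X → False := by
      intro a b hab ha hb
      exact BP_xzx hk0 hab hz (hX.1 _ ha _ hb)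
    have diff : ∀ a b : Fin k, (a:ℕ) ≠ b → xx a ∉ X → xx b ∉ X → False := by
      intro a b hab ha hb
      exact BP_xzx hk0 hab hz (hX.2 _ ha _ hb)
    by_cases h0 : xx ⟨0, by omega⟩ ∈ X <;> by_cases h1 : xx ⟨1, by omega⟩ ∈ X <;>
      by_cases h2 : xx ⟨2, by omega⟩ ∈ X
    · exact same _ _ (by simp) h0 h1
    · exact same _ _ (by simp) h0 h1
    · exact same _ _ (by simp) h0 h2
    · exact diff _ _ (by simp) h1 h2
    · exact same _ _ (by simp) h1 h2
    · exact diff _ _ (by simp) h0 h2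
    · exact diff _ _ (by simp) h0 h1
    · exact diff _ _ (by simp) h0 h1
  -- x_a ∈ X forces its two y-neighbours into X
  have hxy : ∀ a : Fin k, xx a ∈ X →
      yy ⟨2*a, by have := a.isLt; omega⟩ ∈ X ∧ yy ⟨2*a+1, by have := a.isLt; omega⟩ ∈ X := by
    intro a ha
    have haLt := a.isLt
    constructor
    · by_contra hy
      exact BP_zxy hk0 (j := ⟨2*a, by omega⟩) (by simp) ha (hX.2 _ hz _ hy)
    · by_contra hy
      exact BP_zxy hk0 (j := ⟨2*a+1, by omega⟩) (by simp) ha (hX.2 _ hz _ hy)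
  -- at most one x in X
  have honelt : ∀ a b : Fin k, (a:ℕ) < b → xx a ∈ X → xx b ∈ X → False := by
    intro a b hab ha hb
    have haLt := a.isLt
    have hbLt := b.isLt
    obtain ⟨hy2a, hy2a1⟩ := hxy a ha
    obtain ⟨hy2b, -⟩ := hxy b hb
    have hxXa : ∀ c : Fin k, ((2*(a:ℕ) : ℕ) = 2*c ∨ (2*(a:ℕ) : ℕ) = 2*c+1) → xx c ∈ X := by
      intro c hc
      have : c = a := Fin.ext (by omega)
      subst this; exact ha
    by_cases h1 : (b:ℕ) = a+1
    · exact BP_gap2 hk0 (i := ⟨2*a, by omega⟩) (j := ⟨2*b, by omega⟩)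
        (m := ⟨2*a+1, by omega⟩) (by simp; omega) (by simp) hy2a1
        (hX.1 _ hy2a _ hy2b)
    · by_cases h2 : (b:ℕ) = a+2
      · refine BP_gap4 hk0 (i := ⟨2*a, by omega⟩) (j := ⟨2*b, by omega⟩)
          (m := ⟨2*a+1, by omega⟩) (by simp; omega) (by simp) hy2a1
          (by simpa using hxXa) (hX.1 _ hy2a _ hy2b)
      · refine BP_gap5 hk0 (i := ⟨2*a, by omega⟩) (j := ⟨2*b, by omega⟩)
          (by simp; omega) (by simpa using hxXa) (hX.1 _ hy2a _ hy2b)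
  have hone : ∀ a b : Fin k, xx a ∈ X → xx b ∈ X → a = b := by
    intro a b ha hb
    rcases lt_trichotomy (a:ℕ) (b:ℕ) with h | h | h
    · exact absurd (honelt a b h ha hb) (by simp)
    · exact Fin.ext h
    · exact absurd (honelt b a h hb ha) (by simp)
  by_cases hEx : ∃ a : Fin k, xx a ∈ X
  · -- case A : X = {x_a, y_{2a}, y_{2a+1}}
    obtain ⟨a, ha⟩ := hEx
    have haLt := a.isLt
    obtain ⟨hy2a, hy2a1⟩ := hxy a ha
    have hxXa : ∀ c : Fin k, ((2*(a:ℕ) : ℕ) = 2*c ∨ (2*(a:ℕ) : ℕ) = 2*c+1) → xx c ∈ X := by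
      intro c hc
      have : c = a := Fin.ext (by omega)
      subst this; exact ha
    have hxXa1 : ∀ c : Fin k, ((2*(a:ℕ)+1 : ℕ) = 2*c ∨ (2*(a:ℕ)+1 : ℕ) = 2*c+1) → xx c ∈ X := by
      intro c hc
      have : c = a := Fin.ext (by omega)
      subst this; exact ha
    have hsub : X ⊆ {xx a, yy ⟨2*a, by omega⟩, yy ⟨2*a+1, by omega⟩} := by
      intro u hu
      simp only [Set.mem_insert_iff, Set.mem_singleton_iff]
      rcases u with _ | (b | j)
      · exact absurd hu hz
      · left; rw [xx_inj, hone b a hu ha]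
      · have hj := j.isLt
        by_cases e0 : (j:ℕ) = 2*a
        · right; left; rw [yy_inj]; simpa using e0
        · by_cases e1 : (j:ℕ) = 2*a+1
          · right; right; rw [yy_inj]; simpa using e1
          · exfalso
            by_cases c1 : (j:ℕ) = 2*a+2
            · exact BP_gap2 hk0 (i := ⟨2*a, by omega⟩) (j := j) (m := ⟨2*a+1, by omega⟩)
                (by simp; omega) (by simp) hy2a1 (hX.1 _ hy2a _ hu)
            · by_cases c2 : (j:ℕ) = 2*a+3
              · exact BP_gap3 hk0 (i := ⟨2*a, by omega⟩) (j := j) (m := ⟨2*a+1, by omega⟩)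
                  (by simp; omega) (by simp) hy2a1 (hX.1 _ hy2a _ hu)
              · by_cases c3 : (j:ℕ) = 2*a+4
                · exact BP_gap4 hk0 (i := ⟨2*a, by omega⟩) (j := j) (m := ⟨2*a+1, by omega⟩)
                    (by simp; omega) (by simp) hy2a1 (by simpa using hxXa)
                    (hX.1 _ hy2a _ hu)
                · by_cases c4 : 2*(a:ℕ)+5 ≤ j
                  · exact BP_gap5 hk0 (i := ⟨2*a, by omega⟩) (j := j)
                      (by simp; omega) (by simpa using hxXa) (hX.1 _ hy2a _ hu)
                  · -- now j < 2a
                    by_cases c5 : (j:ℕ)+1 = 2*a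
                    · exact BP_gap2 hk0 (i := j) (j := ⟨2*a+1, by omega⟩) (m := ⟨2*a, by omega⟩)
                        (by simp; omega) (by simp; omega) hy2a (hX.1 _ hu _ hy2a1)
                    · by_cases c6 : (j:ℕ)+2 = 2*a
                      · exact BP_gap3d hk0 (i := ⟨2*a+1, by omega⟩) (j := j) (m := ⟨2*a, by omega⟩)
                          (by simp; omega) (by simp) hy2a (hX.1 _ hy2a1 _ hu)
                      · by_cases c7 : (j:ℕ)+3 = 2*a
                        · exact BP_gap4d hk0 (i := ⟨2*a+1, by omega⟩) (j := j)
                            (m := ⟨2*a, by omega⟩) (by simp; omega) (by simp) hy2a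
                            (by simpa using hxXa1) (hX.1 _ hy2a1 _ hu)
                        · have c8 : (j:ℕ)+4 ≤ 2*a := by omega
                          exact BP_gap5 hk0 (i := ⟨2*a+1, by omega⟩) (j := j)
                            (by simp; omega) (by simpa using hxXa1) (hX.1 _ hy2a1 _ hu)
    calc X.ncard ≤ ({xx a, yy ⟨2*a, by omega⟩, yy ⟨2*a+1, by omega⟩} : Set (V k)).ncard :=
        Set.ncard_le_ncard hsub (Set.toFinite _)
    _ ≤ 3 := by
        apply le_trans (Set.ncard_insert_le _ _)
        have := Set.ncard_insert_le (yy ⟨2*a, by omega⟩ : V k) ({yy ⟨2*a+1, by omega⟩} : Set (V k))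
        simp only [Set.ncard_singleton] at this
        omega
  · -- case B : no x in X
    push_neg at hEx
    have hsub : X ⊆ {yy ⟨0, by omega⟩, yy ⟨2*k-1, by omega⟩} := by
      intro u hu
      simp only [Set.mem_insert_iff, Set.mem_singleton_iff]
      rcases u with _ | (b | m)
      · exact absurd hu hz
      · exact absurd hu (hEx b)
      · have hm := m.isLt
        by_cases e0 : (m:ℕ) = 0
        · left; rw [yy_inj]; simpa using e0
        · by_cases e1 : (m:ℕ) = 2*k-1
          · right; rw [yy_inj]; simpa using e1
          · exfalso
            by_cases hp : yy ⟨(m:ℕ)+1, by omega⟩ ∈ X <;>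
              by_cases hq : yy ⟨(m:ℕ)-1, by omega⟩ ∈ X
            · exact BP_gap2 hk0 (i := ⟨(m:ℕ)-1, by omega⟩) (j := ⟨(m:ℕ)+1, by omega⟩) (m := m)
                (by simp; omega) (by simp; omega) hu (hX.1 _ hq _ hp)
            · -- block {m, m+1}
              by_cases c1 : (m:ℕ) = 2*k-2
              · exact BP_xyy hk0 (a := ⟨k-1, by omega⟩) (j := ⟨(m:ℕ)-1, by omega⟩) (m := m)
                  (Or.inl ⟨by simp; omega, by simp; omega⟩) hu
                  (hX.2 _ (hEx ⟨k-1, by omega⟩) _ hq)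
              · by_cases hr : yy ⟨(m:ℕ)+2, by omega⟩ ∈ X
                · exact BP_gap2 hk0 (i := m) (j := ⟨(m:ℕ)+2, by omega⟩)
                    (m := ⟨(m:ℕ)+1, by omega⟩) (by simp) (by simp) hp (hX.1 _ hu _ hr)
                · exact BP_gap3 hk0 (i := ⟨(m:ℕ)-1, by omega⟩) (j := ⟨(m:ℕ)+2, by omega⟩)
                    (m := m) (by simp; omega) (by simp; omega) hu (hX.2 _ hq _ hr)
            · -- block {m-1, m}
              by_cases c1 : (m:ℕ) = 1
              · exact BP_xyy hk0 (a := ⟨0, by omega⟩) (j := ⟨(m:ℕ)+1, by omega⟩) (m := m)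
                  (Or.inr ⟨by simp; omega, by simp; omega⟩) hu
                  (hX.2 _ (hEx ⟨0, by omega⟩) _ hp)
              · by_cases hs : yy ⟨(m:ℕ)-2, by omega⟩ ∈ X
                · exact BP_gap2 hk0 (i := ⟨(m:ℕ)-2, by omega⟩) (j := m)
                    (m := ⟨(m:ℕ)-1, by omega⟩) (by simp; omega) (by simp; omega) hq
                    (hX.1 _ hs _ hu)
                · exact BP_gap3d hk0 (i := ⟨(m:ℕ)+1, by omega⟩) (j := ⟨(m:ℕ)-2, by omega⟩)
                    (m := m) (by simp; omega) (by simp) hu (hX.2 _ hp _ hs)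
            · exact BP_gap2 hk0 (i := ⟨(m:ℕ)-1, by omega⟩) (j := ⟨(m:ℕ)+1, by omega⟩) (m := m)
                (by simp; omega) (by simp; omega) hu (hX.2 _ hq _ hp)
    calc X.ncard ≤ ({yy ⟨0, by omega⟩, yy ⟨2*k-1, by omega⟩} : Set (V k)).ncard :=
        Set.ncard_le_ncard hsub (Set.toFinite _)
    _ ≤ 3 := by
        apply le_trans (Set.ncard_insert_le _ _)
        simp [Set.ncard_singleton]

lemma muD_value (hk : 5 ≤ k) : muD (Fgraph k) = 3 := by
  have hk0 : 0 < k := by omega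
  have hcard : ({xx ⟨0, by omega⟩, yy ⟨0, by omega⟩, yy ⟨1, by omega⟩} : Set (V k)).ncard = 3 := by
    rw [Set.ncard_insert_of_notMem (by simp [xx, yy]) (Set.toFinite _),
      Set.ncard_pair (by rw [Ne, yy_inj]; simp)]
  have hmem : 3 ∈ {n | ∃ X : Set (V k), IsDualMVSet (Fgraph k) X ∧ X.ncard = n} :=
    ⟨_, dual_example hk, hcard⟩
  have hub : ∀ n ∈ {n | ∃ X : Set (V k), IsDualMVSet (Fgraph k) X ∧ X.ncard = n}, n ≤ 3 := by
    rintro n ⟨X, hX, rfl⟩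
    exact dual_card hk hX
  exact le_antisymm (csSup_le ⟨3, hmem⟩ hub) (le_csSup ⟨3, hub⟩ hmem)

end Fk

theorem stmt_18 (k : ℕ) (hk : 5 ≤ k) :
    muT (Fgraph k) = 2 ∧ muD (Fgraph k) = 3 :=
  ⟨Fk.muT_value hk, Fk.muD_value hk⟩
end

section
/- For every integer k ≥ 5, let F_k be the graph with vertex set {z} ∪ {x_1,…,x_k} ∪ {y_1,…,y_{2k}} and edges z x_i (i ∈ [k]), x_i y_{2i−1}, x_i y_{2i} (i ∈ [k]), and y_j y_{j+1} (j ∈ [2k−1]). Then μ_t(F_k − z) = μ_d(F_k − z) = μ_o(F_k − z) = μ(F_k − z) = k + 2. -/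
open SimpleGraph

lemma walk_pot_s19 {V : Type*} {G : SimpleGraph V} (f : V → ℤ) (S : Set V)
    (hf : ∀ a b, G.Adj a b → a ∉ S → b ∉ S → |f a - f b| ≤ 2)
    {u v : V} (p : G.Walk u v) (hp : ∀ w ∈ p.support, w ∉ S) :
    |f u - f v| ≤ 2 * p.length := by
  induction p with
  | nil => simp
  | @cons a b c h q ih =>
    have ha : a ∉ S := hp a (by simp)
    have hb : b ∉ S := hp b (by simp)
    have h1 : |f a - f b| ≤ 2 := hf a b h ha hb
    have h2 : |f b - f c| ≤ 2 * q.length := ih (fun w hw => hp w (by simp [hw]))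
    calc |f a - f c| ≤ |f a - f b| + |f b - f c| := abs_sub_le _ _ _
    _ ≤ 2 + 2 * q.length := by linarith
    _ = 2 * (Walk.cons h q).length := by simp [Walk.length_cons]; ring

lemma no_internal {V : Type*} [DecidableEq V] {G : SimpleGraph V} {u v w : V} (p : G.Walk u v)
    (hp : p.length = G.dist u v) (hw : w ∈ p.support) (hu : w ≠ u) (hv : w ≠ v)
    (hcl : ∀ a b, G.Adj w a → G.Adj w b → a = b ∨ G.Adj a b) : False := by
  set q := p.takeUntil w hw with hq
  set r := p.dropUntil w hw with hr
  have hlen : q.length + r.length = p.length := by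
    rw [← Walk.length_append, Walk.take_spec]
  obtain ⟨b, hwb, r', hr'⟩ := Walk.exists_eq_cons_of_ne hv r
  obtain ⟨a, hwa, q2, hq2⟩ := Walk.exists_eq_cons_of_ne hu q.reverse
  have hqlen : q.length = q2.length + 1 := by
    have := congrArg Walk.length hq2
    simpa using this
  have hq2' : q = (Walk.cons hwa q2).reverse := by rw [← hq2]; simp
  have hrlen : r.length = r'.length + 1 := by rw [hr']; simp
  -- q2 : Walk a u, so q2.reverse : Walk u a
  rcases hcl a b hwa hwb with hab | hab
  · subst hab
    have hd := SimpleGraph.dist_le (q2.reverse.append r')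
    rw [← hp] at hd
    simp [Walk.length_append] at hd
    omega
  · have hd := SimpleGraph.dist_le (q2.reverse.append (Walk.cons hab r'))
    rw [← hp] at hd
    simp [Walk.length_append] at hd
    omega

section
variable (k : ℕ)

abbrev FS (k : ℕ) : Set (Option (Fin k ⊕ Fin (2 * k))) := {v | v ≠ none}

abbrev GF (k : ℕ) := (Fgraph k).induce (FS k)

def Xv (i : Fin k) : ↥(FS k) := ⟨some (Sum.inl i), by simp [FS]⟩
def Yv (j : Fin (2*k)) : ↥(FS k) := ⟨some (Sum.inr j), by simp [FS]⟩

lemma adj_iff (a b : ↥(FS k)) :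
    (GF k).Adj a b ↔ a.val ≠ b.val ∧ (Frel k a.val b.val ∨ Frel k b.val a.val) := by
  simp [GF, Fgraph, SimpleGraph.fromRel_adj]

lemma vertex_cases (a : ↥(FS k)) : (∃ i, a = Xv k i) ∨ (∃ j, a = Yv k j) := by
  obtain ⟨v, hv⟩ := a
  match v with
  | none => exact absurd rfl hv
  | some (Sum.inl i) => exact Or.inl ⟨i, rfl⟩
  | some (Sum.inr j) => exact Or.inr ⟨j, rfl⟩

lemma adj_YY {j j' : Fin (2*k)} (h : (j' : ℕ) = (j : ℕ) + 1) : (GF k).Adj (Yv k j) (Yv k j') := by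
  rw [adj_iff]
  refine ⟨?_, Or.inl ?_⟩
  · simp only [Yv, ne_eq, Option.some.injEq, Sum.inr.injEq]
    intro hjj; rw [hjj] at h; omega
  · exact h

lemma adj_XY {i : Fin k} {j : Fin (2*k)} (h : (j : ℕ) = 2 * i ∨ (j : ℕ) = 2 * i + 1) :
    (GF k).Adj (Xv k i) (Yv k j) := by
  rw [adj_iff]
  exact ⟨by simp [Xv, Yv], Or.inl h⟩

lemma adj_X_right {i : Fin k} {b : ↥(FS k)} (h : (GF k).Adj (Xv k i) b) :
    ∃ j : Fin (2*k), b = Yv k j ∧ ((j : ℕ) = 2 * i ∨ (j : ℕ) = 2 * i + 1) := by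
  rw [adj_iff] at h
  obtain ⟨hne, hrel⟩ := h
  rcases vertex_cases k b with ⟨i', rfl⟩ | ⟨j, rfl⟩
  · exact absurd hrel (by simp [Xv, Frel])
  · refine ⟨j, rfl, ?_⟩
    rcases hrel with h | h
    · exact h
    · exact absurd h (by simp [Xv, Yv, Frel])


lemma Yv_inj {j j' : Fin (2*k)} (h : Yv k j = Yv k j') : j = j' := by
  simpa [Yv] using h

lemma adj_Y_right {j : Fin (2*k)} {b : ↥(FS k)} (h : (GF k).Adj (Yv k j) b) :
    (∃ i : Fin k, b = Xv k i ∧ ((j : ℕ) = 2 * i ∨ (j : ℕ) = 2 * i + 1)) ∨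
    (∃ j' : Fin (2*k), b = Yv k j' ∧ ((j' : ℕ) = j + 1 ∨ (j : ℕ) = j' + 1)) := by
  rw [adj_iff] at h
  obtain ⟨hne, hrel⟩ := h
  rcases vertex_cases k b with ⟨i, rfl⟩ | ⟨j', rfl⟩
  · left
    refine ⟨i, rfl, ?_⟩
    rcases hrel with h | h
    · exact absurd h (by simp [Xv, Yv, Frel])
    · exact h
  · right
    refine ⟨j', rfl, ?_⟩
    rcases hrel with h | h
    · exact Or.inl h
    · exact Or.inr h

-- potential function
def pot : ↥(FS k) → ℤ := fun a =>
  match a.val with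
  | some (Sum.inl i) => 4 * (i : ℕ) + 1
  | some (Sum.inr j) => 2 * (j : ℕ)
  | none => 0

lemma pot_X (i : Fin k) : pot k (Xv k i) = 4 * (i : ℕ) + 1 := rfl
lemma pot_Y (j : Fin (2*k)) : pot k (Yv k j) = 2 * (j : ℕ) := rfl

lemma pot_lip {a b : ↥(FS k)} (h : (GF k).Adj a b) : |pot k a - pot k b| ≤ 2 := by
  rw [adj_iff] at h
  obtain ⟨hne, hrel⟩ := h
  rcases vertex_cases k a with ⟨i, rfl⟩ | ⟨j, rfl⟩ <;>
    rcases vertex_cases k b with ⟨i', rfl⟩ | ⟨j', rfl⟩ <;>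
    simp only [Xv, Yv, Frel] at hrel <;>
    rcases hrel with h | h
  · exact absurd h (by simp [Frel])
  · exact absurd h (by simp [Frel])
  · simp only [pot_X, pot_Y]; rw [abs_sub_le_iff]; constructor <;> omega
  · exact absurd h (by simp [Frel])
  · exact absurd h (by simp [Frel])
  · simp only [pot_X, pot_Y]; rw [abs_sub_le_iff]; constructor <;> omega
  · simp only [pot_Y]; rw [abs_sub_le_iff]; constructor <;> omega
  · simp only [pot_Y]; rw [abs_sub_le_iff]; constructor <;> omega

-- blocked potential: y_b removed
def bpot (b : ℕ) : ↥(FS k) → ℤ := fun a => pot k a + (if 2 * (b:ℤ) < pot k a then 2 else 0)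

lemma bpot_lip {m : ℕ} {a b : ↥(FS k)} (h : (GF k).Adj a b)
    (hm : m < 2 * k)
    (ha : a ≠ Yv k ⟨m, hm⟩) (hb : b ≠ Yv k ⟨m, hm⟩) :
    |bpot k m a - bpot k m b| ≤ 2 := by
  have hlip := pot_lip k h
  rw [adj_iff] at h
  obtain ⟨hne, hrel⟩ := h
  rcases vertex_cases k a with ⟨i, rfl⟩ | ⟨j, rfl⟩ <;>
    rcases vertex_cases k b with ⟨i', rfl⟩ | ⟨j', rfl⟩ <;>
    simp only [Xv, Yv, Frel] at hrel <;>
    rcases hrel with h | h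
  · exact absurd h (by simp [Frel])
  · exact absurd h (by simp [Frel])
  -- x_i  y_j'
  · have hj' : (j' : ℕ) ≠ m := by
      intro hc; apply hb; simp only [Yv]; congr 1; simp [Fin.ext_iff, hc]
    simp only [bpot, pot_X, pot_Y]
    rcases h with h | h <;> (rw [abs_sub_le_iff]; split_ifs <;> omega)
  · exact absurd h (by simp [Frel])
  · exact absurd h (by simp [Frel])
  · have hj : (j : ℕ) ≠ m := by
      intro hc; apply ha; simp only [Yv]; congr 1; simp [Fin.ext_iff, hc]
    simp only [bpot, pot_X, pot_Y]
    rcases h with h | h <;> (rw [abs_sub_le_iff]; split_ifs <;> omega)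
  -- y_j y_j'
  · have hj : (j : ℕ) ≠ m := by
      intro hc; apply ha; simp only [Yv]; congr 1; simp [Fin.ext_iff, hc]
    have hj' : (j' : ℕ) ≠ m := by
      intro hc; apply hb; simp only [Yv]; congr 1; simp [Fin.ext_iff, hc]
    simp only [bpot, pot_Y]
    rw [abs_sub_le_iff]; split_ifs <;> omega
  · have hj : (j : ℕ) ≠ m := by
      intro hc; apply ha; simp only [Yv]; congr 1; simp [Fin.ext_iff, hc]
    have hj' : (j' : ℕ) ≠ m := by
      intro hc; apply hb; simp only [Yv]; congr 1; simp [Fin.ext_iff, hc]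
    simp only [bpot, pot_Y]
    rw [abs_sub_le_iff]; split_ifs <;> omega

-- explicit walk along the y-path
lemma exists_walkY : ∀ (n : ℕ) (a c : Fin (2*k)), (c : ℕ) = a + n →
    ∃ p : (GF k).Walk (Yv k a) (Yv k c), p.length = n := by
  intro n
  induction n with
  | zero =>
    intro a c hc
    have : a = c := Fin.ext (by omega)
    subst this
    exact ⟨Walk.nil, rfl⟩
  | succ n ih =>
    intro a c hc
    have ha1 : (a : ℕ) + 1 < 2 * k := by have := c.isLt; omega
    set a' : Fin (2*k) := ⟨a + 1, ha1⟩ with ha'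
    obtain ⟨p, hp⟩ := ih a' c (by simp [ha']; omega)
    exact ⟨Walk.cons (adj_YY k (by simp [ha'])) p, by simp [hp]⟩

lemma reach_Y0 (hk : 1 ≤ k) (v : ↥(FS k)) : (GF k).Reachable (Yv k ⟨0, by omega⟩) v := by
  have hy : ∀ j : Fin (2*k), (GF k).Reachable (Yv k ⟨0, by omega⟩) (Yv k j) := by
    intro j
    obtain ⟨p, _⟩ := exists_walkY k j ⟨0, by omega⟩ j (by simp)
    exact ⟨p⟩
  rcases vertex_cases k v with ⟨i, rfl⟩ | ⟨j, rfl⟩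
  · have h2i : 2 * (i:ℕ) < 2 * k := by have := i.isLt; omega
    have : (GF k).Adj (Xv k i) (Yv k ⟨2*i, h2i⟩) := adj_XY k (Or.inl rfl)
    exact (hy ⟨2*i, h2i⟩).trans this.symm.reachable
  · exact hy j

lemma GF_conn (hk : 1 ≤ k) : (GF k).Connected := by
  rw [connected_iff]
  constructor
  · intro u v
    exact (reach_Y0 k hk u).symm.trans (reach_Y0 k hk v)
  · exact ⟨Yv k ⟨0, by omega⟩⟩

def y0 (hk : 1 ≤ k) : ↥(FS k) := Yv k ⟨0, by omega⟩
def yl (hk : 1 ≤ k) : ↥(FS k) := Yv k ⟨2*k-1, by omega⟩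

def Xset (hk : 1 ≤ k) : Set (↥(FS k)) := Set.range (Xv k) ∪ {y0 k hk, yl k hk}

lemma Xv_eq_iff {i i' : Fin k} : Xv k i = Xv k i' ↔ (i:ℕ) = (i':ℕ) := by
  simp [Xv, Fin.ext_iff]

lemma Yv_eq_iff {j j' : Fin (2*k)} : Yv k j = Yv k j' ↔ (j:ℕ) = (j':ℕ) := by
  simp [Yv, Fin.ext_iff]

lemma clique_nbhd (hk : 1 ≤ k) (w : ↥(FS k)) (hw : w ∈ Xset k hk) :
    ∀ a b, (GF k).Adj w a → (GF k).Adj w b → a = b ∨ (GF k).Adj a b := by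
  intro a b haw hbw
  rcases hw with ⟨i, rfl⟩ | hw
  · -- w = Xv i
    obtain ⟨ja, rfl, hja⟩ := adj_X_right k haw
    obtain ⟨jb, rfl, hjb⟩ := adj_X_right k hbw
    rcases hja with hja | hja <;> rcases hjb with hjb | hjb
    · left; rw [Yv_eq_iff]; omega
    · right; exact adj_YY k (by omega)
    · right; exact (adj_YY k (by omega)).symm
    · left; rw [Yv_eq_iff]; omega
  · -- w = y0 or yl
    have key0 : ∀ c : ↥(FS k), (GF k).Adj (y0 k hk) c →
        (c = Xv k ⟨0, by omega⟩ ∨ c = Yv k ⟨1, by omega⟩) := by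
      intro c hc
      rcases adj_Y_right k hc with ⟨i, rfl, hi⟩ | ⟨j', rfl, hj'⟩
      · left; rw [Xv_eq_iff]; simp only [Fin.val_mk] at hi ⊢; omega
      · right; rw [Yv_eq_iff]; simp only [Fin.val_mk] at hj' ⊢
        have := j'.isLt; omega
    have keyl : ∀ c : ↥(FS k), (GF k).Adj (yl k hk) c →
        (c = Xv k ⟨k-1, by omega⟩ ∨ c = Yv k ⟨2*k-2, by omega⟩) := by
      intro c hc
      rcases adj_Y_right k hc with ⟨i, rfl, hi⟩ | ⟨j', rfl, hj'⟩
      · left; rw [Xv_eq_iff]; simp only [Fin.val_mk] at hi ⊢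
        have := i.isLt; omega
      · right; rw [Yv_eq_iff]; simp only [Fin.val_mk] at hj' ⊢
        have := j'.isLt; omega
    rcases hw with rfl | rfl
    · rcases key0 a haw with rfl | rfl <;> rcases key0 b hbw with rfl | rfl
      · left; rfl
      · right; refine adj_XY k ?_; exact Or.inr rfl
      · right; refine (adj_XY k ?_).symm; exact Or.inr rfl
      · left; rfl
    · rcases keyl a haw with rfl | rfl <;> rcases keyl b hbw with rfl | rfl
      · left; rfl
      · right; refine adj_XY k ?_; exact Or.inl (by show 2*k-2 = 2*(k-1); omega)
      · right; refine (adj_XY k ?_).symm; exact Or.inl (by show 2*k-2 = 2*(k-1); omega)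
      · left; rfl

lemma total_Xset (hk : 1 ≤ k) : ∀ u v : ↥(FS k), IsMVisible (GF k) (Xset k hk) u v := by
  intro u v
  obtain ⟨p, hp⟩ := (GF_conn k hk).exists_walk_length_eq_dist u v
  refine ⟨p, hp, ?_⟩
  intro w hw hwX
  by_contra hcon
  push_neg at hcon
  exact no_internal p hp hw hcon.1 hcon.2 (clique_nbhd k hk w hwX)

lemma Xv_ne_Yv (i : Fin k) (j : Fin (2*k)) : Xv k i ≠ Yv k j := by
  simp [Xv, Yv]

lemma Xv_inj : Function.Injective (Xv k) := by
  intro i i' h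
  simpa [Xv] using h

lemma ncard_Xset (hk : 1 ≤ k) : (Xset k hk).ncard = k + 2 := by
  have h1 : (Set.range (Xv k)).ncard = k := by
    rw [← Nat.card_coe_set_eq, Nat.card_range_of_injective (Xv_inj k), Nat.card_eq_fintype_card,
      Fintype.card_fin]
  have hne : y0 k hk ≠ yl k hk := by
    simp only [y0, yl, ne_eq, Yv_eq_iff]
    omega
  have hdisj : Disjoint (Set.range (Xv k)) ({y0 k hk, yl k hk} : Set _) := by
    rw [Set.disjoint_right]
    rintro a (rfl | rfl) ⟨i, hi⟩ <;> exact Xv_ne_Yv k i _ hi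
  rw [Xset, Set.ncard_union_eq hdisj (Set.toFinite _) (Set.toFinite _), h1,
    Set.ncard_pair hne]

lemma not_vis (hk : 1 ≤ k) {X : Set ↥(FS k)} {a b c : Fin (2*k)}
    (hab : (a:ℕ) < b) (hbc : (b:ℕ) < c) (hbX : Yv k b ∈ X) :
    ¬ IsMVisible (GF k) X (Yv k a) (Yv k c) := by
  rintro ⟨p, hlen, hsup⟩
  obtain ⟨q, hq⟩ := exists_walkY k ((c:ℕ) - a) a c (by omega)
  have hd : (GF k).dist (Yv k a) (Yv k c) ≤ (c:ℕ) - a := hq ▸ SimpleGraph.dist_le q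
  have hav : ∀ w ∈ p.support, w ∉ ({Yv k b} : Set _) := by
    intro w hw hwb
    simp only [Set.mem_singleton_iff] at hwb
    subst hwb
    rcases hsup _ hw hbX with h | h <;> rw [Yv_eq_iff] at h <;> omega
  have hlip : ∀ x y, (GF k).Adj x y → x ∉ ({Yv k b} : Set _) → y ∉ ({Yv k b} : Set _) →
      |bpot k (b:ℕ) x - bpot k (b:ℕ) y| ≤ 2 := by
    intro x y hxy hx hy
    simp only [Set.mem_singleton_iff] at hx hy
    have : Yv k ⟨(b:ℕ), b.isLt⟩ = Yv k b := by rw [Yv_eq_iff]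
    exact bpot_lip k hxy b.isLt (by rw [this]; exact hx) (by rw [this]; exact hy)
  have hW := walk_pot_s19 (bpot k (b:ℕ)) {Yv k b} hlip p hav
  have e1 : bpot k (b:ℕ) (Yv k a) = 2 * (a:ℕ) := by
    simp only [bpot, pot_Y]
    simp [show ¬ (2 * ((b:ℕ):ℤ) < 2 * ((a:ℕ):ℤ)) by omega]
    exact Fin.le_iff_val_le_val.mpr hab.le
  have e2 : bpot k (b:ℕ) (Yv k c) = 2 * (c:ℕ) + 2 := by
    simp only [bpot, pot_Y]
    split_ifs <;> omega
  rw [e1, e2, hlen] at hW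
  have : |2 * (a:ℤ) - (2 * (c:ℕ) + 2)| = 2 * (c:ℕ) + 2 - 2 * (a:ℕ) := by
    rw [abs_sub_comm, abs_of_nonneg (by push_cast; omega)]
  rw [this] at hW
  have hc := hd
  omega

lemma sorted_three {n : ℕ} (x y z : Fin n) (hxy : x ≠ y) (hxz : x ≠ z) (hyz : y ≠ z)
    (T : Set (Fin n)) (hx : x ∈ T) (hy : y ∈ T) (hz : z ∈ T) :
    ∃ a b c : Fin n, a ∈ T ∧ b ∈ T ∧ c ∈ T ∧ (a:ℕ) < b ∧ (b:ℕ) < c := by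
  have hxy' := Fin.val_ne_iff.mpr hxy
  have hxz' := Fin.val_ne_iff.mpr hxz
  have hyz' := Fin.val_ne_iff.mpr hyz
  rcases Nat.lt_or_ge (x:ℕ) (y:ℕ) with h1 | h1 <;>
  rcases Nat.lt_or_ge (y:ℕ) (z:ℕ) with h2 | h2 <;>
  rcases Nat.lt_or_ge (x:ℕ) (z:ℕ) with h3 | h3
  · exact ⟨x, y, z, hx, hy, hz, h1, h2⟩
  · exact ⟨x, y, z, hx, hy, hz, h1, h2⟩
  · exact ⟨x, z, y, hx, hz, hy, by omega, by omega⟩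
  · exact ⟨z, x, y, hz, hx, hy, by omega, by omega⟩
  · exact ⟨y, x, z, hy, hx, hz, by omega, by omega⟩
  · exact ⟨y, z, x, hy, hz, hx, by omega, by omega⟩
  · exact ⟨y, z, x, hy, hz, hx, by omega, by omega⟩
  · exact ⟨z, y, x, hz, hy, hx, by omega, by omega⟩

lemma mv_card_le (hk : 1 ≤ k) {X : Set ↥(FS k)}
    (hX : ∀ u ∈ X, ∀ v ∈ X, IsMVisible (GF k) X u v) : X.ncard ≤ k + 2 := by
  classical
  set T : Set (Fin (2*k)) := {j | Yv k j ∈ X} with hTdef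
  have hT : T.ncard ≤ 2 := by
    by_contra h
    push_neg at h
    obtain ⟨x, hx, y, hy, z, hz, hxy, hxz, hyz⟩ := (Set.two_lt_ncard (Set.toFinite T)).mp h
    obtain ⟨a, b, c, ha, hb, hc, h1, h2⟩ := sorted_three x y z hxy hxz hyz T hx hy hz
    exact not_vis k hk h1 h2 hb (hX _ ha _ hc)
  have hsub : X ⊆ Set.range (Xv k) ∪ (Yv k '' T) := by
    intro v hv
    rcases vertex_cases k v with ⟨i, rfl⟩ | ⟨j, rfl⟩
    · exact Or.inl ⟨i, rfl⟩
    · exact Or.inr ⟨j, hv, rfl⟩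
  calc X.ncard ≤ (Set.range (Xv k) ∪ (Yv k '' T)).ncard :=
        Set.ncard_le_ncard hsub (Set.toFinite _)
    _ ≤ (Set.range (Xv k)).ncard + (Yv k '' T).ncard := Set.ncard_union_le _ _
    _ ≤ k + 2 := by
        have h1 : (Set.range (Xv k)).ncard = k := by
          rw [← Nat.card_coe_set_eq, Nat.card_range_of_injective (Xv_inj k),
            Nat.card_eq_fintype_card, Fintype.card_fin]
        have h2 : (Yv k '' T).ncard ≤ T.ncard := Set.ncard_image_le (Set.toFinite _)
        omega

end

theorem stmt_19 (k : ℕ) (hk : 5 ≤ k) :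
    muT ((Fgraph k).induce {v | v ≠ none}) = k + 2 ∧
    muD ((Fgraph k).induce {v | v ≠ none}) = k + 2 ∧
    muO ((Fgraph k).induce {v | v ≠ none}) = k + 2 ∧
    mu ((Fgraph k).induce {v | v ≠ none}) = k + 2 := by
  have hk1 : 1 ≤ k := by omega
  have hmem_total : ∀ u v : ↥(FS k), IsMVisible (GF k) (Xset k hk1) u v := total_Xset k hk1
  have hcard := ncard_Xset k hk1
  have hub : ∀ X : Set ↥(FS k), IsMVSet (GF k) X → X.ncard ≤ k + 2 :=
    fun X h => mv_card_le k hk1 h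
  have sup_eq : ∀ (P : Set ↥(FS k) → Prop), P (Xset k hk1) →
      (∀ X, P X → IsMVSet (GF k) X) →
      sSup {n | ∃ X, P X ∧ X.ncard = n} = k + 2 := by
    intro P hP himp
    have hbdd : ∀ n ∈ {n | ∃ X, P X ∧ X.ncard = n}, n ≤ k + 2 := by
      rintro n ⟨X, hX, rfl⟩
      exact hub X (himp X hX)
    have hmem : k + 2 ∈ {n | ∃ X, P X ∧ X.ncard = n} := ⟨Xset k hk1, hP, hcard⟩
    exact le_antisymm (csSup_le ⟨k+2, hmem⟩ hbdd) (le_csSup ⟨k+2, hbdd⟩ hmem)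
  refine ⟨?_, ?_, ?_, ?_⟩
  · exact sup_eq (IsTotalMVSet (GF k)) (fun u v => hmem_total u v)
      (fun X h u _ v _ => h u v)
  · exact sup_eq (IsDualMVSet (GF k))
      ⟨fun u _ v _ => hmem_total u v, fun u _ v _ => hmem_total u v⟩ (fun X h => h.1)
  · exact sup_eq (IsOuterMVSet (GF k)) (fun u _ v => hmem_total u v)
      (fun X h u hu v _ => h u hu v)
  · exact sup_eq (IsMVSet (GF k)) (fun u _ v _ => hmem_total u v) (fun X h => h)
end
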